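/- arXiv:1103.4518 — 2 statements merged into one kernel-verified Lean document; each statement's English description precedes it below -/
import Mathlib

section
/- There exists a centrally symmetric convex domain K₀ in the plane realizing the lower bound δ_min: that is, δ_lat(K₀) ≤ δ_lat(K) for every centrally symmetric convex domain K. -/
open MeasureTheory

noncomputable section

/-- The wedge (cross) product of two planar vectors. -/
def wedge (v w : ℝ × ℝ) : ℝ := v.1 * w.2 - v.2 * w.1

/-- A centrally symmetric convex domain in the plane. -/
def IsCSCD (K : Set (ℝ × ℝ)) : Prop :=
  Convex ℝ K ∧ IsCompact K ∧ (interior K).Nonempty ∧ K = -K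

/-- The lattice spanned over `ℤ` by the vectors `v` and `w`. -/
def latticeOf (v w : ℝ × ℝ) : Set (ℝ × ℝ) :=
  {p | ∃ m n : ℤ, p = (m : ℝ) • v + (n : ℝ) • w}

/-- `Λ + K` is a packing of `K`. -/
def IsPacking (K Λ : Set (ℝ × ℝ)) : Prop :=
  ∀ p ∈ Λ, ∀ q ∈ Λ, p ≠ q →
    interior ((fun x => p + x) '' K) ∩ interior ((fun x => q + x) '' K) = ∅

/-- The set of densities of lattice packings of `K`. -/
def packingDensities (K : Set (ℝ × ℝ)) : Set ℝ :=
  {d | ∃ v w : ℝ × ℝ, wedge v w ≠ 0 ∧ IsPacking K (latticeOf v w) ∧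
       d = (volume K).toReal / |wedge v w|}

/-- `δ_lat(K)`: the supremum of densities of lattice packings of `K`. -/
def deltaLat (K : Set (ℝ × ℝ)) : ℝ := sSup (packingDensities K)

open Set Metric TopologicalSpace
open scoped Pointwise

/-- The linear equivalence sending `(1,0) ↦ v`, `(0,1) ↦ w`. -/
def equivOf (v w : ℝ × ℝ) (h : wedge v w ≠ 0) : (ℝ × ℝ) ≃ₗ[ℝ] (ℝ × ℝ) where
  toFun p := (p.1 * v.1 + p.2 * w.1, p.1 * v.2 + p.2 * w.2)
  map_add' p q := by simp only [Prod.fst_add, Prod.snd_add, Prod.mk_add_mk]; congr 1 <;> ring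
  map_smul' c p := by
    simp only [Prod.smul_fst, Prod.smul_snd, smul_eq_mul, RingHom.id_apply, Prod.smul_mk]
    congr 1 <;> ring
  invFun q := ((q.1 * w.2 - q.2 * w.1) / wedge v w, (q.2 * v.1 - q.1 * v.2) / wedge v w)
  left_inv p := by
    have h' : v.1 * w.2 - v.2 * w.1 ≠ 0 := h
    ext <;> · simp only; field_simp [wedge]; simp only [wedge]; ring
  right_inv q := by
    have h' : v.1 * w.2 - v.2 * w.1 ≠ 0 := h
    ext <;> · simp only; field_simp [wedge]; simp only [wedge]; ring

lemma equivOf_apply (v w : ℝ × ℝ) (h : wedge v w ≠ 0) (p : ℝ × ℝ) :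
    equivOf v w h p = (p.1 * v.1 + p.2 * w.1, p.1 * v.2 + p.2 * w.2) := rfl

def basisOf (v w : ℝ × ℝ) (h : wedge v w ≠ 0) : Module.Basis (Fin 2) ℝ (ℝ × ℝ) :=
  (Module.Basis.finTwoProd ℝ).map (equivOf v w h)

lemma basisOf_zero (v w : ℝ × ℝ) (h : wedge v w ≠ 0) : basisOf v w h 0 = v := by
  simp [basisOf, equivOf_apply, Module.Basis.map_apply]

lemma basisOf_one (v w : ℝ × ℝ) (h : wedge v w ≠ 0) : basisOf v w h 1 = w := by
  simp [basisOf, equivOf_apply, Module.Basis.map_apply]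

lemma range_basisOf (v w : ℝ × ℝ) (h : wedge v w ≠ 0) :
    Set.range (basisOf v w h) = {v, w} := by
  ext x
  constructor
  · rintro ⟨i, rfl⟩
    fin_cases i
    · left; exact basisOf_zero _ _ _
    · right; exact basisOf_one _ _ _
  · rintro (rfl | rfl)
    · exact ⟨0, basisOf_zero _ _ _⟩
    · exact ⟨1, basisOf_one _ _ _⟩

lemma latticeOf_eq_span (v w : ℝ × ℝ) (h : wedge v w ≠ 0) :
    latticeOf v w = ((Submodule.span ℤ (Set.range (basisOf v w h))) : Set (ℝ × ℝ)) := by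
  rw [range_basisOf]
  ext x
  simp only [latticeOf, Set.mem_setOf_eq, SetLike.mem_coe, Submodule.mem_span_pair]
  constructor
  · rintro ⟨m, n, rfl⟩
    exact ⟨m, n, by rw [Int.cast_smul_eq_zsmul ℝ m v, Int.cast_smul_eq_zsmul ℝ n w]⟩
  · rintro ⟨m, n, rfl⟩
    exact ⟨m, n, by rw [Int.cast_smul_eq_zsmul ℝ m v, Int.cast_smul_eq_zsmul ℝ n w]⟩

lemma fundamentalDomain_finTwoProd :
    ZSpan.fundamentalDomain (Module.Basis.finTwoProd ℝ) = Set.Ico (0:ℝ) 1 ×ˢ Set.Ico (0:ℝ) 1 := by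
  ext p
  simp only [ZSpan.mem_fundamentalDomain, Set.mem_prod, Module.Basis.coe_finTwoProd_repr]
  rw [Fin.forall_fin_two]
  simp

lemma volume_fundamentalDomain_finTwoProd :
    volume (ZSpan.fundamentalDomain (Module.Basis.finTwoProd ℝ)) = 1 := by
  rw [fundamentalDomain_finTwoProd, Measure.volume_eq_prod, Measure.prod_prod,
    Real.volume_Ico]
  simp

lemma volume_fundamentalDomain_basisOf (v w : ℝ × ℝ) (h : wedge v w ≠ 0) :
    volume (ZSpan.fundamentalDomain (basisOf v w h)) = ENNReal.ofReal |wedge v w| := by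
  classical
  rw [ZSpan.measure_fundamentalDomain (basisOf v w h) volume (Module.Basis.finTwoProd ℝ),
    volume_fundamentalDomain_finTwoProd, mul_one]
  congr 1
  rw [Module.Basis.det_apply]
  rw [show (Module.Basis.finTwoProd ℝ).toMatrix (basisOf v w h) =
    Matrix.of ![![v.1, w.1], ![v.2, w.2]] from ?_]
  · rw [Matrix.det_fin_two]
    simp only [wedge, Matrix.of_apply]
    norm_num
    ring_nf
  · ext i j
    fin_cases i <;> fin_cases j <;>
      simp [Module.Basis.toMatrix_apply, basisOf_zero, basisOf_one, Module.Basis.coe_finTwoProd_repr]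

lemma finrank_prod_real : Module.finrank ℝ (ℝ × ℝ) = 2 := by
  simp [Module.finrank_prod]

lemma interior_image_add (p : ℝ × ℝ) (K : Set (ℝ × ℝ)) :
    interior ((fun x => p + x) '' K) = (fun x => p + x) '' interior K := by
  have h : (fun x : ℝ × ℝ => p + x) = ⇑(Homeomorph.addLeft p) := rfl
  rw [h, Homeomorph.image_interior]

lemma interior_neg' (s : Set (ℝ × ℝ)) : interior (-s) = -interior s := by
  have h1 := (Homeomorph.neg (ℝ × ℝ)).image_interior s
  have h2 : ⇑(Homeomorph.neg (ℝ × ℝ)) = fun x : ℝ × ℝ => -x := rfl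
  rw [h2, Set.image_neg_eq_neg, Set.image_neg_eq_neg] at h1
  exact h1.symm

lemma zero_mem_latticeOf (v w : ℝ × ℝ) : (0 : ℝ × ℝ) ∈ latticeOf v w :=
  ⟨0, 0, by simp⟩

lemma volume_le_covol {K : Set (ℝ × ℝ)} (hK : IsCSCD K) {v w : ℝ × ℝ} (h : wedge v w ≠ 0)
    (hp : IsPacking K (latticeOf v w)) : volume K ≤ ENNReal.ofReal |wedge v w| := by
  by_contra hlt
  rw [not_le] at hlt
  obtain ⟨hconv, hcomp, hint, hsymm⟩ := hK
  have fund := ZSpan.isAddFundamentalDomain' (basisOf v w h) volume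
  have hcount : Countable (Submodule.span ℤ (Set.range (basisOf v w h))).toAddSubgroup :=
    inferInstanceAs (Countable (Submodule.span ℤ (Set.range (basisOf v w h))))
  -- the interior of 2•K
  set s : Set (ℝ × ℝ) := interior ((2:ℝ) • K) with hs
  have hKsymm' : -((2:ℝ) • K) = (2:ℝ) • K := by
    rw [← Set.smul_set_neg, ← hsymm]
  have h_symm : ∀ x ∈ s, -x ∈ s := by
    intro x hx
    rw [hs, ← hKsymm', interior_neg']
    simpa using hx
  have h_conv : Convex ℝ s := (hconv.smul 2).interior
  have hvol2 : volume ((2:ℝ) • K) = 4 * volume K := by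
    rw [Measure.addHaar_smul_of_nonneg volume (by norm_num : (0:ℝ) ≤ 2) K, finrank_prod_real]
    norm_num
  have hvols : volume s = 4 * volume K := by
    rw [← hvol2]
    refine le_antisymm (measure_mono interior_subset) ?_
    calc volume ((2:ℝ) • K)
        ≤ volume (interior ((2:ℝ) • K) ∪ frontier ((2:ℝ) • K)) := by
          refine measure_mono ?_
          intro x hx
          have hx' : x ∈ closure ((2:ℝ) • K) := subset_closure hx
          rwa [← closure_eq_interior_union_frontier]
      _ ≤ volume (interior ((2:ℝ) • K)) + volume (frontier ((2:ℝ) • K)) := measure_union_le _ _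
      _ = volume s := by rw [(hconv.smul 2).addHaar_frontier volume, add_zero]
  have hmink : volume (ZSpan.fundamentalDomain (basisOf v w h)) * 2 ^ Module.finrank ℝ (ℝ × ℝ)
      < volume s := by
    rw [volume_fundamentalDomain_basisOf v w h, hvols, finrank_prod_real]
    have h4 : (2:ENNReal) ^ (2:ℕ) = 4 := by norm_num
    rw [h4, mul_comm (4 : ENNReal) (volume K)]
    exact (ENNReal.mul_lt_mul_iff_left (by norm_num) (by norm_num)).mpr hlt
  obtain ⟨x, hx0, hxs⟩ :=
    exists_ne_zero_mem_lattice_of_measure_mul_two_pow_lt_measure fund h_symm h_conv hmink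
  -- extract u with x = 2u
  rw [hs, interior_smul₀ (two_ne_zero) K] at hxs
  obtain ⟨u, hu, hxu⟩ := hxs
  have hnegu : -u ∈ interior K := by
    have : -u ∈ -interior K := Set.neg_mem_neg.mpr hu
    rwa [← interior_neg', ← hsymm] at this
  have hxmem : ((x : (Submodule.span ℤ (Set.range (basisOf v w h))).toAddSubgroup) : ℝ × ℝ) ∈ latticeOf v w := by
    rw [latticeOf_eq_span v w h]
    exact x.2
  have hne : (0 : ℝ × ℝ) ≠ ((x : _) : ℝ × ℝ) := by
    intro hc
    exact hx0 (ZeroMemClass.coe_eq_zero.mp hc.symm)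
  have disj := hp 0 (zero_mem_latticeOf v w) _ hxmem hne
  have hu1 : u ∈ interior ((fun y => (0:ℝ×ℝ) + y) '' K) := by
    simpa [Set.image_id'] using hu
  have hu2 : u ∈ interior ((fun y => ((x : _) : ℝ × ℝ) + y) '' K) := by
    rw [interior_image_add]
    refine ⟨-u, hnegu, ?_⟩
    show ((x : _) : ℝ × ℝ) + -u = u
    rw [← hxu]
    show (2:ℝ) • u + -u = u
    rw [two_smul]
    abel
  exact absurd (disj ▸ Set.mem_inter hu1 hu2) (Set.notMem_empty u)

section Bounds

lemma mem_packingDensities_nonneg {K : Set (ℝ × ℝ)} {d : ℝ} (hd : d ∈ packingDensities K) :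
    0 ≤ d := by
  obtain ⟨v, w, h, hp, rfl⟩ := hd
  positivity

lemma deltaLat_nonneg (K : Set (ℝ × ℝ)) : 0 ≤ deltaLat K :=
  Real.sSup_nonneg fun _ hd => mem_packingDensities_nonneg hd

lemma mem_packingDensities_le_one {K : Set (ℝ × ℝ)} (hK : IsCSCD K) {d : ℝ}
    (hd : d ∈ packingDensities K) : d ≤ 1 := by
  obtain ⟨v, w, h, hp, rfl⟩ := hd
  have hw : (0:ℝ) < |wedge v w| := abs_pos.mpr h
  rw [div_le_one hw]
  exact ENNReal.toReal_le_of_le_ofReal (abs_nonneg _) (volume_le_covol hK h hp)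

lemma bddAbove_packingDensities {K : Set (ℝ × ℝ)} (hK : IsCSCD K) :
    BddAbove (packingDensities K) :=
  ⟨1, fun _ hd => mem_packingDensities_le_one hK hd⟩

lemma deltaLat_le_one {K : Set (ℝ × ℝ)} (hK : IsCSCD K) : deltaLat K ≤ 1 :=
  Real.sSup_le (fun _ hd => mem_packingDensities_le_one hK hd) zero_le_one

end Bounds

section Transform

variable (T : (ℝ × ℝ) ≃ₗ[ℝ] (ℝ × ℝ))

lemma homeo_eq : ⇑(T.toContinuousLinearEquiv.toHomeomorph) = ⇑T := rfl

lemma interior_image_equiv (s : Set (ℝ × ℝ)) : interior (⇑T '' s) = ⇑T '' interior s := by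
  rw [← homeo_eq, ← Homeomorph.image_interior]

lemma decomp (v : ℝ × ℝ) : v = v.1 • ((1:ℝ), (0:ℝ)) + v.2 • ((0:ℝ), (1:ℝ)) := by
  ext <;> simp

lemma map_decomp (v : ℝ × ℝ) : T v = v.1 • T (1, 0) + v.2 • T (0, 1) := by
  conv_lhs => rw [decomp v]
  rw [map_add, _root_.map_smul, _root_.map_smul]

lemma wedge_equiv (v w : ℝ × ℝ) :
    wedge (T v) (T w) = LinearMap.det (T : (ℝ × ℝ) →ₗ[ℝ] (ℝ × ℝ)) * wedge v w := by
  have hdet : LinearMap.det (T : (ℝ × ℝ) →ₗ[ℝ] (ℝ × ℝ)) = wedge (T (1,0)) (T (0,1)) := by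
    rw [← LinearMap.det_toMatrix (Module.Basis.finTwoProd ℝ), Matrix.det_fin_two]
    simp only [LinearMap.toMatrix_apply, Module.Basis.coe_finTwoProd_repr, Module.Basis.finTwoProd_zero,
      Module.Basis.finTwoProd_one, LinearEquiv.coe_coe]
    show (T (1,0)).1 * (T (0,1)).2 - (T (0,1)).1 * (T (1,0)).2 = wedge _ _
    simp [wedge]; ring
  rw [hdet, map_decomp T v, map_decomp T w]
  simp only [wedge, Prod.fst_add, Prod.snd_add, Prod.smul_fst, Prod.smul_snd, smul_eq_mul]
  ring

lemma det_ne_zero : LinearMap.det (T : (ℝ × ℝ) →ₗ[ℝ] (ℝ × ℝ)) ≠ 0 :=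
  T.isUnit_det'.ne_zero

lemma image_latticeOf (v w : ℝ × ℝ) : ⇑T '' latticeOf v w = latticeOf (T v) (T w) := by
  ext x
  constructor
  · rintro ⟨p, ⟨m, n, rfl⟩, rfl⟩
    exact ⟨m, n, by simp⟩
  · rintro ⟨m, n, rfl⟩
    exact ⟨(m:ℝ) • v + (n:ℝ) • w, ⟨m, n, rfl⟩, by simp⟩

lemma isPacking_mono {K K' Λ : Set (ℝ × ℝ)} (hsub : K' ⊆ K) (hp : IsPacking K Λ) :
    IsPacking K' Λ := by
  intro p hp' q hq' hne
  have h := hp p hp' q hq' hne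
  refine Set.eq_empty_of_subset_empty ?_
  rw [← h]
  exact Set.inter_subset_inter (interior_mono (Set.image_mono hsub))
    (interior_mono (Set.image_mono hsub))

lemma isPacking_image {K Λ : Set (ℝ × ℝ)} (hp : IsPacking K Λ) :
    IsPacking (⇑T '' K) (⇑T '' Λ) := by
  rintro p ⟨p', hp', rfl⟩ q ⟨q', hq', rfl⟩ hne
  have hne' : p' ≠ q' := fun hc => hne (by rw [hc])
  have key : ∀ r : ℝ × ℝ, (fun x => T r + x) '' (⇑T '' K) = ⇑T '' ((fun x => r + x) '' K) := by
    intro r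
    rw [Set.image_image, Set.image_image]
    apply Set.image_congr
    intro a _
    rw [← map_add]
  rw [key, key, interior_image_equiv, interior_image_equiv, ← Set.image_inter T.injective,
    hp p' hp' q' hq' hne', Set.image_empty]

lemma packingDensities_subset_image (K : Set (ℝ × ℝ)) :
    packingDensities K ⊆ packingDensities (⇑T '' K) := by
  rintro d ⟨v, w, h, hp, rfl⟩
  refine ⟨T v, T w, ?_, ?_, ?_⟩
  · rw [wedge_equiv]
    exact mul_ne_zero (det_ne_zero T) h
  · rw [← image_latticeOf]
    exact isPacking_image T hp
  · have hImg : volume (⇑T '' K)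
        = ENNReal.ofReal |LinearMap.det (T : (ℝ × ℝ) →ₗ[ℝ] (ℝ × ℝ))| * volume K := by
      rw [← LinearEquiv.coe_coe]
      exact Measure.addHaar_image_linearMap volume _ K
    rw [wedge_equiv, hImg, ENNReal.toReal_mul, ENNReal.toReal_ofReal (abs_nonneg _), abs_mul,
      mul_div_mul_left _ _ (by exact abs_ne_zero.mpr (det_ne_zero T))]

lemma packingDensities_image (K : Set (ℝ × ℝ)) :
    packingDensities (⇑T '' K) = packingDensities K := by
  refine le_antisymm ?_ (packingDensities_subset_image T K)
  have h := packingDensities_subset_image T.symm (⇑T '' K)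
  rwa [Set.image_image, show (fun x => T.symm (T x)) = id from funext fun x => T.symm_apply_apply x,
    Set.image_id] at h

lemma deltaLat_image (K : Set (ℝ × ℝ)) : deltaLat (⇑T '' K) = deltaLat K := by
  rw [deltaLat, deltaLat, packingDensities_image]

end Transform

lemma key_estimate {A B : Set (ℝ × ℝ)} (hA : IsCSCD A) (hB : IsCSCD B) {c : ℝ} (hc : 1 ≤ c)
    (hAB : A ⊆ c • B) (hBA : B ⊆ c • A) : deltaLat A ≤ c ^ 4 * deltaLat B := by
  have hc0 : (0:ℝ) < c := lt_of_lt_of_le one_pos hc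
  have hdB := deltaLat_nonneg B
  refine Real.sSup_le ?_ (by positivity)
  rintro d ⟨v, w, h, hp, rfl⟩
  set T := LinearEquiv.smulOfNeZero ℝ (ℝ × ℝ) c hc0.ne'  with hT
  have hTapp : ∀ x : ℝ × ℝ, T x = c • x := fun x => rfl
  have hTim : ∀ s : Set (ℝ × ℝ), ⇑T '' s = c • s := by
    intro s
    ext x
    simp [hTapp, Set.mem_smul_set]
  have hwc : wedge (c • v) (c • w) = c ^ 2 * wedge v w := by
    simp only [wedge, Prod.smul_fst, Prod.smul_snd, smul_eq_mul]
    ring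
  have hne2 : wedge (c • v) (c • w) ≠ 0 := by
    rw [hwc]
    positivity
  have hpB : IsPacking B (latticeOf (c • v) (c • w)) := by
    have h1 := isPacking_image T hp
    rw [image_latticeOf, hTim, hTapp, hTapp] at h1
    exact isPacking_mono hBA h1
  have hmem : (volume B).toReal / |wedge (c • v) (c • w)| ∈ packingDensities B :=
    ⟨c • v, c • w, hne2, hpB, rfl⟩
  have hle : (volume B).toReal / |wedge (c • v) (c • w)| ≤ deltaLat B :=
    le_csSup (bddAbove_packingDensities hB) hmem
  have hBfin : volume B ≠ ⊤ := hB.2.1.measure_lt_top.ne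
  have hvol : (volume A).toReal ≤ c ^ 2 * (volume B).toReal := by
    have h1 : volume A ≤ volume (c • B) := measure_mono hAB
    rw [Measure.addHaar_smul_of_nonneg volume hc0.le, finrank_prod_real] at h1
    have habs : |c| = c := abs_of_pos hc0
    calc (volume A).toReal ≤ (ENNReal.ofReal (c ^ 2) * volume B).toReal :=
          ENNReal.toReal_mono (ENNReal.mul_ne_top ENNReal.ofReal_ne_top hBfin) h1
      _ = c ^ 2 * (volume B).toReal := by
          rw [ENNReal.toReal_mul, ENNReal.toReal_ofReal (by positivity)]
  have hwpos : (0:ℝ) < |wedge v w| := abs_pos.mpr h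
  calc (volume A).toReal / |wedge v w|
      ≤ (c ^ 2 * (volume B).toReal) / |wedge v w| := by gcongr
    _ = c ^ 4 * ((volume B).toReal / |wedge (c • v) (c • w)|) := by
        rw [hwc, abs_mul, abs_of_pos (by positivity : (0:ℝ) < c ^ 2)]
        field_simp
    _ ≤ c ^ 4 * deltaLat B := by gcongr

/-- The cross-polytope (unit ball of ℓ¹). -/
def Dcr : Set (ℝ × ℝ) := {p | |p.1| + |p.2| ≤ 1}

/-- The square (unit ball of ℓ∞). -/
def Qsq : Set (ℝ × ℝ) := {p | |p.1| ≤ 1 ∧ |p.2| ≤ 1}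

lemma zero_mem_interior_of_cscd {K : Set (ℝ × ℝ)} (hK : IsCSCD K) : (0:ℝ×ℝ) ∈ interior K := by
  obtain ⟨hconv, hcomp, ⟨z, hz⟩, hsymm⟩ := hK
  have hz' : -z ∈ interior K := by
    have h1 : -z ∈ -interior K := Set.neg_mem_neg.mpr hz
    have h2 : interior (-K) = -interior K := by
      have h3 := (Homeomorph.neg (ℝ × ℝ)).image_interior K
      have h4 : ⇑(Homeomorph.neg (ℝ × ℝ)) = fun x : ℝ × ℝ => -x := rfl
      rw [h4, Set.image_neg_eq_neg, Set.image_neg_eq_neg] at h3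
      exact h3.symm
    rw [← h2, ← hsymm] at h1
    exact h1
  have := hconv.interior hz hz' (by norm_num : (0:ℝ) ≤ 1/2) (by norm_num : (0:ℝ) ≤ 1/2)
    (by norm_num)
  simpa using this

lemma exists_ball_subset_of_cscd {K : Set (ℝ × ℝ)} (hK : IsCSCD K) :
    ∃ ε > 0, Metric.ball (0:ℝ×ℝ) ε ⊆ K := by
  have h0 := zero_mem_interior_of_cscd hK
  rw [mem_interior_iff_mem_nhds, Metric.mem_nhds_iff] at h0
  obtain ⟨ε, hε, hb⟩ := h0
  exact ⟨ε, hε, hb⟩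

lemma exists_normalization {K : Set (ℝ × ℝ)} (hK : IsCSCD K) :
    ∃ K' : Set (ℝ × ℝ), (∃ T : (ℝ × ℝ) ≃ₗ[ℝ] (ℝ × ℝ), K' = ⇑T '' K) ∧
      IsCSCD K' ∧ Dcr ⊆ K' ∧ K' ⊆ Qsq := by
  obtain ⟨hconv, hcomp, hint, hsymm⟩ := hK
  obtain ⟨ε, hε, hball⟩ := exists_ball_subset_of_cscd ⟨hconv, hcomp, hint, hsymm⟩
  have h0K : (0:ℝ×ℝ) ∈ K := hball (by simp [hε])
  -- maximize |wedge| on K ×ˢ K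
  have hKK : IsCompact (K ×ˢ K) := hcomp.prod hcomp
  have hne : (K ×ˢ K).Nonempty := ⟨(0,0), h0K, h0K⟩
  have hcont : ContinuousOn (fun q : (ℝ×ℝ)×(ℝ×ℝ) => |wedge q.1 q.2|) (K ×ˢ K) := by
    apply Continuous.continuousOn
    apply Continuous.abs
    exact ((continuous_fst.fst.mul continuous_snd.snd).sub
      (continuous_fst.snd.mul continuous_snd.fst))
  obtain ⟨⟨a, b⟩, habK, hmax⟩ := hKK.exists_isMaxOn hne hcont
  have haK : a ∈ K := habK.1
  have hbK : b ∈ K := habK.2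
  -- the max is positive
  have hx : ((ε/2 : ℝ), (0:ℝ)) ∈ K := by
    apply hball
    rw [mem_ball_zero_iff, Prod.norm_def]
    simp only [norm_zero, Real.norm_eq_abs]
    rw [abs_of_pos (by linarith : (0:ℝ) < ε/2)]
    simp only [sup_le_iff, max_lt_iff]
    constructor <;> linarith
  have hy : ((0:ℝ), (ε/2 : ℝ)) ∈ K := by
    apply hball
    rw [mem_ball_zero_iff, Prod.norm_def]
    simp only [norm_zero, Real.norm_eq_abs]
    rw [abs_of_pos (by linarith : (0:ℝ) < ε/2)]
    simp only [sup_le_iff, max_lt_iff]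
    constructor <;> linarith
  have hMpos : 0 < |wedge a b| := by
    have h5 := hmax (Set.mk_mem_prod hx hy)
    simp only [Set.mem_setOf_eq] at h5
    have hw : |wedge ((ε/2 : ℝ), (0:ℝ)) ((0:ℝ), (ε/2 : ℝ))| = ε^2/4 := by
      simp only [wedge]
      rw [abs_of_pos] <;> nlinarith
    rw [hw] at h5
    nlinarith
  have hab : wedge a b ≠ 0 := abs_pos.mp hMpos
  set S := equivOf a b hab with hS
  set T := S.symm with hT
  set K' : Set (ℝ × ℝ) := ⇑T '' K with hK'
  have hSa : S (1, 0) = a := by rw [equivOf_apply]; ext <;> simp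
  have hSb : S (0, 1) = b := by rw [equivOf_apply]; ext <;> simp
  have hTa : T a = (1, 0) := by rw [hT, LinearEquiv.symm_apply_eq, hSa]
  have hTb : T b = (0, 1) := by rw [hT, LinearEquiv.symm_apply_eq, hSb]
  -- basic structure
  have hconv' : Convex ℝ K' := hconv.linear_image (T : (ℝ × ℝ) →ₗ[ℝ] (ℝ × ℝ))
  have hcomp' : IsCompact K' := hcomp.image T.toContinuousLinearEquiv.continuous
  have hsymm' : K' = -K' := by
    rw [hK']
    conv_lhs => rw [hsymm]
    rw [← Set.image_neg_eq_neg, ← Set.image_neg_eq_neg, Set.image_image, Set.image_image]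
    apply Set.image_congr
    intro x _
    simp
  have hint' : (interior K').Nonempty := by
    rw [hK', interior_image_equiv]
    exact hint.image _
  have hCSCD' : IsCSCD K' := ⟨hconv', hcomp', hint', hsymm'⟩
  -- wedge bound on K'
  have hdet1 : |wedge ((1:ℝ), (0:ℝ)) ((0:ℝ), (1:ℝ))| = 1 := by simp [wedge]
  have hwK' : ∀ x ∈ K', ∀ y ∈ K', |wedge x y| ≤ 1 := by
    rintro x ⟨u, hu, rfl⟩ y ⟨v, hv, rfl⟩
    have h1 : |wedge (T u) (T v)| =
        |LinearMap.det (T : (ℝ × ℝ) →ₗ[ℝ] (ℝ × ℝ))| * |wedge u v| := by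
      rw [wedge_equiv, abs_mul]
    have h2 : |LinearMap.det (T : (ℝ × ℝ) →ₗ[ℝ] (ℝ × ℝ))| * |wedge a b| = 1 := by
      have := wedge_equiv T a b
      rw [hTa, hTb] at this
      have h3 : |wedge ((1:ℝ), (0:ℝ)) ((0:ℝ), (1:ℝ))|
          = |LinearMap.det (T : (ℝ × ℝ) →ₗ[ℝ] (ℝ × ℝ))| * |wedge a b| := by
        rw [this, abs_mul]
      rw [← h3, hdet1]
    rw [h1]
    calc |LinearMap.det (T : (ℝ × ℝ) →ₗ[ℝ] (ℝ × ℝ))| * |wedge u v|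
        ≤ |LinearMap.det (T : (ℝ × ℝ) →ₗ[ℝ] (ℝ × ℝ))| * |wedge a b| := by
          apply mul_le_mul_of_nonneg_left (hmax (Set.mk_mem_prod hu hv)) (abs_nonneg _)
      _ = 1 := h2
  -- membership of the four vertices and 0
  have he1 : ((1:ℝ), (0:ℝ)) ∈ K' := ⟨a, haK, hTa⟩
  have he2 : ((0:ℝ), (1:ℝ)) ∈ K' := ⟨b, hbK, hTb⟩
  have hneg : ∀ x ∈ K', -x ∈ K' := by
    intro x hx
    rw [hsymm']
    exact Set.neg_mem_neg.mpr hx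
  have h0K' : (0:ℝ×ℝ) ∈ K' := ⟨0, h0K, map_zero _⟩
  refine ⟨K', ⟨T, rfl⟩, hCSCD', ?_, ?_⟩
  · -- Dcr ⊆ K'
    intro p hp
    have hp' : |p.1| + |p.2| ≤ 1 := hp
    set s := |p.1| with hs
    set t := |p.2| with ht
    have hs0 : 0 ≤ s := abs_nonneg _
    have ht0 : 0 ≤ t := abs_nonneg _
    set a1 : ℝ × ℝ := if 0 ≤ p.1 then (1, 0) else (-1, 0) with ha1
    set a2 : ℝ × ℝ := if 0 ≤ p.2 then (0, 1) else (0, -1) with ha2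
    have ha1K : a1 ∈ K' := by
      rw [ha1]; split
      · exact he1
      · simpa using hneg _ he1
    have ha2K : a2 ∈ K' := by
      rw [ha2]; split
      · exact he2
      · simpa using hneg _ he2
    have hsa1 : s • a1 = (p.1, 0) := by
      rw [ha1, hs]
      rcases le_or_gt 0 p.1 with h | h
      · rw [if_pos h, abs_of_nonneg h]; ext <;> simp
      · rw [if_neg (not_le.mpr h), abs_of_neg h]; ext <;> simp
    have hta2 : t • a2 = (0, p.2) := by
      rw [ha2, ht]
      rcases le_or_gt 0 p.2 with h | h
      · rw [if_pos h, abs_of_nonneg h]; ext <;> simp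
      · rw [if_neg (not_le.mpr h), abs_of_neg h]; ext <;> simp
    have hpsum : p = s • a1 + t • a2 := by
      rw [hsa1, hta2]; ext <;> simp
    rcases eq_or_lt_of_le (add_nonneg hs0 ht0) with hst | hst
    · -- s + t = 0, so p = 0
      have hs' : s = 0 := by linarith [hs0, ht0, hst.symm ▸ (rfl : s + t = s + t)]
      have ht' : t = 0 := by linarith [hst.symm ▸ (rfl : (0:ℝ) = 0)]
      have : p = 0 := by
        rw [hpsum, hs', ht']
        simp
      rw [this]; exact h0K'
    · -- s + t > 0
      have hstpos : 0 < s + t := hst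
      have hm : (s/(s+t)) • a1 + (t/(s+t)) • a2 ∈ K' :=
        hconv' ha1K ha2K (by positivity) (by positivity) (by field_simp)
      have hfin := hconv' hm h0K' (le_of_lt hstpos)
        (by linarith : (0:ℝ) ≤ 1 - (s + t)) (by ring)
      have heq : (s+t) • ((s/(s+t)) • a1 + (t/(s+t)) • a2) + (1 - (s+t)) • (0:ℝ×ℝ) = p := by
        rw [smul_zero, add_zero, smul_add, smul_smul, smul_smul, hpsum]
        congr 2 <;> field_simp
      rw [heq] at hfin
      exact hfin
  · -- K' ⊆ Qsq
    intro p hp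
    constructor
    · have h1 := hwK' p hp _ he2
      have h2 : wedge p ((0:ℝ), (1:ℝ)) = p.1 := by simp [wedge]
      rwa [h2] at h1
    · have h1 := hwK' _ he1 p hp
      have h2 : wedge ((1:ℝ), (0:ℝ)) p = p.2 := by simp [wedge]
      rwa [h2] at h1

lemma isClosed_Qsq : IsClosed Qsq := by
  have : Qsq = (fun p : ℝ × ℝ => |p.1|) ⁻¹' Set.Iic 1 ∩ (fun p : ℝ × ℝ => |p.2|) ⁻¹' Set.Iic 1 :=
    rfl
  rw [this]
  exact (IsClosed.preimage continuous_fst.abs isClosed_Iic).inter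
    (IsClosed.preimage continuous_snd.abs isClosed_Iic)

lemma isCompact_Qsq : IsCompact Qsq := by
  refine Metric.isCompact_of_isClosed_isBounded isClosed_Qsq ?_
  refine (Metric.isBounded_closedBall (x := (0:ℝ×ℝ)) (r := 1)).subset ?_
  intro p hp
  rw [Metric.mem_closedBall, dist_zero_right, Prod.norm_def]
  exact sup_le (by simpa using hp.1) (by simpa using hp.2)

/-- The class of normalized domains, as a set of nonempty compact sets. -/
def NClass : Set (NonemptyCompacts (ℝ × ℝ)) :=
  {A | Convex ℝ (A : Set (ℝ × ℝ)) ∧ (A : Set (ℝ × ℝ)) = -(A : Set (ℝ × ℝ)) ∧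
       Dcr ⊆ (A : Set (ℝ × ℝ)) ∧ (A : Set (ℝ × ℝ)) ⊆ Qsq}

lemma hEdist_ne_top (A B : NonemptyCompacts (ℝ × ℝ)) :
    EMetric.hausdorffEdist (A : Set (ℝ × ℝ)) (B : Set (ℝ × ℝ)) ≠ ⊤ :=
  Metric.hausdorffEdist_ne_top_of_nonempty_of_bounded A.nonempty B.nonempty
    A.isCompact.isBounded B.isCompact.isBounded

lemma approx_right {A B : NonemptyCompacts (ℝ × ℝ)} {ε : ℝ} (h : dist A B < ε)
    {x : ℝ × ℝ} (hx : x ∈ (A : Set (ℝ × ℝ))) : ∃ y ∈ (B : Set (ℝ × ℝ)), dist x y < ε := by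
  rw [NonemptyCompacts.dist_eq] at h
  exact Metric.exists_dist_lt_of_hausdorffDist_lt hx h (hEdist_ne_top A B)

lemma approx_left {A B : NonemptyCompacts (ℝ × ℝ)} {ε : ℝ} (h : dist A B < ε)
    {y : ℝ × ℝ} (hy : y ∈ (B : Set (ℝ × ℝ))) : ∃ x ∈ (A : Set (ℝ × ℝ)), dist x y < ε := by
  rw [NonemptyCompacts.dist_eq] at h
  obtain ⟨x, hx, hd⟩ := Metric.exists_dist_lt_of_hausdorffDist_lt' hy h (hEdist_ne_top A B)
  exact ⟨x, hx, hd⟩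

-- compactness of the collection of nonempty compact subsets of Qsq
lemma isCompact_subsets_Qsq : IsCompact {A : NonemptyCompacts (ℝ × ℝ) | (A : Set (ℝ×ℝ)) ⊆ Qsq} := by
  haveI : CompactSpace ↥Qsq := isCompact_iff_compactSpace.mp isCompact_Qsq
  let Φ : NonemptyCompacts ↥Qsq → NonemptyCompacts (ℝ × ℝ) := fun A =>
    ⟨⟨Subtype.val '' (A : Set ↥Qsq), A.isCompact.image continuous_subtype_val⟩,
      A.nonempty.image _⟩
  have hiso : Isometry Φ := by
    refine Isometry.of_dist_eq ?_
    intro A B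
    rw [NonemptyCompacts.dist_eq, NonemptyCompacts.dist_eq]
    exact Metric.hausdorffDist_image isometry_subtype_coe
  have hrange : {A : NonemptyCompacts (ℝ × ℝ) | (A : Set (ℝ×ℝ)) ⊆ Qsq} = Set.range Φ := by
    ext A
    constructor
    · intro hA
      have hclosed : IsClosed (Subtype.val ⁻¹' (A : Set (ℝ×ℝ)) : Set ↥Qsq) :=
        IsClosed.preimage continuous_subtype_val A.isCompact.isClosed
      have hcpt : IsCompact (Subtype.val ⁻¹' (A : Set (ℝ×ℝ)) : Set ↥Qsq) :=
        hclosed.isCompact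
      have hne : (Subtype.val ⁻¹' (A : Set (ℝ×ℝ)) : Set ↥Qsq).Nonempty := by
        obtain ⟨a, ha⟩ := A.nonempty
        exact ⟨⟨a, hA ha⟩, ha⟩
      refine ⟨⟨⟨Subtype.val ⁻¹' (A : Set (ℝ×ℝ)), hcpt⟩, hne⟩, ?_⟩
      apply NonemptyCompacts.ext
      show Subtype.val '' (Subtype.val ⁻¹' (A : Set (ℝ×ℝ))) = (A : Set (ℝ×ℝ))
      rw [Subtype.image_preimage_coe]
      exact Set.inter_eq_self_of_subset_right hA
    · rintro ⟨B, rfl⟩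
      rintro x ⟨b, _, rfl⟩
      exact b.2
  rw [hrange]
  exact isCompact_range hiso.continuous

lemma isClosed_NClass : IsClosed NClass := by
  refine isClosed_of_closure_subset ?_
  intro A hA
  have hmem : ∀ ε > 0, ∃ B ∈ NClass, dist A B < ε := fun ε hε =>
    Metric.mem_closure_iff.mp hA ε hε
  have hAclosed : IsClosed (A : Set (ℝ×ℝ)) := A.isCompact.isClosed
  have hmemA : ∀ x : ℝ × ℝ, (∀ ε > 0, ∃ z ∈ (A : Set (ℝ×ℝ)), dist x z < ε) →
      x ∈ (A : Set (ℝ×ℝ)) := by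
    intro x hx
    rw [← hAclosed.closure_eq]
    exact Metric.mem_closure_iff.mpr hx
  refine ⟨?_, ?_, ?_, ?_⟩
  · -- convex
    intro x hx y hy a b ha hb hab
    apply hmemA
    intro ε hε
    obtain ⟨B, hB, hdist⟩ := hmem (ε/4) (by linarith)
    obtain ⟨x', hx', hdx⟩ := approx_right hdist hx
    obtain ⟨y', hy', hdy⟩ := approx_right hdist hy
    have hz' : a • x' + b • y' ∈ (B : Set (ℝ×ℝ)) := hB.1 hx' hy' ha hb hab
    obtain ⟨z, hz, hdz⟩ := approx_left hdist hz'
    rw [dist_comm] at hdz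
    refine ⟨z, hz, ?_⟩
    have hd1 : dist (a • x + b • y) (a • x' + b • y') ≤ a * dist x x' + b * dist y y' := by
      rw [dist_eq_norm, dist_eq_norm, dist_eq_norm]
      have : a • x + b • y - (a • x' + b • y') = a • (x - x') + b • (y - y') := by
        module
      rw [this]
      refine (norm_add_le _ _).trans ?_
      rw [norm_smul, norm_smul, Real.norm_eq_abs, Real.norm_eq_abs,
        abs_of_nonneg ha, abs_of_nonneg hb]
    have ha1 : a ≤ 1 := by linarith
    have hb1 : b ≤ 1 := by linarith
    have : a * dist x x' ≤ dist x x' := by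
      nlinarith [dist_nonneg (x := x) (y := x')]
    have : b * dist y y' ≤ dist y y' := by
      nlinarith [dist_nonneg (x := y) (y := y')]
    calc dist (a • x + b • y) z ≤ dist (a • x + b • y) (a • x' + b • y')
          + dist (a • x' + b • y') z := dist_triangle _ _ _
      _ < ε := by nlinarith [dist_nonneg (x := x) (y := x'), dist_nonneg (x := y) (y := y')]
  · -- symmetric
    have hsub : ∀ x ∈ (A : Set (ℝ×ℝ)), -x ∈ (A : Set (ℝ×ℝ)) := by
      intro x hx
      apply hmemA
      intro ε hε
      obtain ⟨B, hB, hdist⟩ := hmem (ε/2) (by linarith)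
      obtain ⟨y, hy, hdy⟩ := approx_right hdist hx
      have hny : -y ∈ (B : Set (ℝ×ℝ)) := by
        rw [hB.2.1]
        exact Set.neg_mem_neg.mpr hy
      obtain ⟨z, hz, hdz⟩ := approx_left hdist hny
      rw [dist_comm] at hdz
      refine ⟨z, hz, ?_⟩
      have : dist (-x) (-y) = dist x y := dist_neg_neg x y
      calc dist (-x) z ≤ dist (-x) (-y) + dist (-y) z := dist_triangle _ _ _
        _ < ε := by rw [this]; linarith
    ext x
    constructor
    · intro hx
      rw [Set.mem_neg]
      simpa using hsub x hx
    · intro hx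
      rw [Set.mem_neg] at hx
      simpa using hsub _ hx
  · -- Dcr ⊆ A
    intro d hd
    apply hmemA
    intro ε hε
    obtain ⟨B, hB, hdist⟩ := hmem ε hε
    obtain ⟨z, hz, hdz⟩ := approx_left hdist (hB.2.2.1 hd)
    exact ⟨z, hz, by rw [dist_comm]; exact hdz⟩
  · -- A ⊆ Qsq
    intro x hx
    rw [← isClosed_Qsq.closure_eq]
    rw [Metric.mem_closure_iff]
    intro ε hε
    obtain ⟨B, hB, hdist⟩ := hmem ε hε
    obtain ⟨y, hy, hdy⟩ := approx_right hdist hx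
    exact ⟨y, hB.2.2.2 hy, hdy⟩

lemma isCompact_NClass : IsCompact NClass :=
  IsCompact.of_isClosed_subset isCompact_subsets_Qsq isClosed_NClass
    (fun _ hA => hA.2.2.2)

lemma convex_Qsq : Convex ℝ Qsq := by
  have : Qsq = (LinearMap.fst ℝ ℝ ℝ) ⁻¹' {x : ℝ | |x| ≤ 1} ∩
      (LinearMap.snd ℝ ℝ ℝ) ⁻¹' {x : ℝ | |x| ≤ 1} := rfl
  rw [this]
  have hIcc : {x : ℝ | |x| ≤ 1} = Set.Icc (-1:ℝ) 1 := by ext x; simp [abs_le]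
  rw [hIcc]
  exact ((convex_Icc (-1:ℝ) 1).linear_preimage _).inter
    ((convex_Icc (-1:ℝ) 1).linear_preimage _)

lemma Qsq_symm : Qsq = -Qsq := by
  ext p
  simp only [Qsq, Set.mem_neg, Set.mem_setOf_eq, Prod.fst_neg, Prod.snd_neg, abs_neg]

lemma Dcr_subset_Qsq : Dcr ⊆ Qsq := by
  intro p hp
  have h : |p.1| + |p.2| ≤ 1 := hp
  exact ⟨by nlinarith [abs_nonneg p.2], by nlinarith [abs_nonneg p.1]⟩

lemma Qsq_mem_NClass : (⟨⟨Qsq, isCompact_Qsq⟩, ⟨0, by simp [Qsq]⟩⟩ : NonemptyCompacts (ℝ×ℝ))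
    ∈ NClass :=
  ⟨convex_Qsq, Qsq_symm, Dcr_subset_Qsq, le_refl _⟩

lemma ball_subset_Dcr : Metric.ball (0:ℝ×ℝ) (1/2 : ℝ) ⊆ Dcr := by
  intro p hp
  rw [mem_ball_zero_iff, Prod.norm_def] at hp
  simp only [Real.norm_eq_abs] at hp
  have h1 : |p.1| < 1/2 := lt_of_le_of_lt le_sup_left hp
  have h2 : |p.2| < 1/2 := lt_of_le_of_lt le_sup_right hp
  show |p.1| + |p.2| ≤ 1
  linarith

lemma nclass_cscd {A : NonemptyCompacts (ℝ × ℝ)} (hA : A ∈ NClass) :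
    IsCSCD (A : Set (ℝ × ℝ)) := by
  refine ⟨hA.1, A.isCompact, ?_, hA.2.1⟩
  have hball : Metric.ball (0:ℝ×ℝ) (1/2 : ℝ) ⊆ (A : Set (ℝ × ℝ)) :=
    fun x hx => hA.2.2.1 (ball_subset_Dcr hx)
  have := (Metric.isOpen_ball (x := (0:ℝ×ℝ)) (ε := (1/2:ℝ))).subset_interior_iff.mpr hball
  exact ⟨0, this (by simp)⟩

lemma subset_smul_of_close {A B : NonemptyCompacts (ℝ × ℝ)} (hB : B ∈ NClass) {ε : ℝ}
    (hε : 0 < ε) (h : dist A B < ε) :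
    (A : Set (ℝ × ℝ)) ⊆ (1 + 2 * ε) • (B : Set (ℝ × ℝ)) := by
  intro x hx
  obtain ⟨y, hy, hdy⟩ := approx_right h hx
  have hd : x - y ∈ (2 * ε) • Dcr := by
    refine ⟨(2*ε)⁻¹ • (x - y), ?_, ?_⟩
    · show |((2*ε)⁻¹ • (x - y)).1| + |((2*ε)⁻¹ • (x - y)).2| ≤ 1
      have hn : ‖x - y‖ < ε := by rw [← dist_eq_norm]; exact hdy
      have h1 : |(x-y).1| ≤ ‖x - y‖ := by
        rw [Prod.norm_def]; simp only [Real.norm_eq_abs]; exact le_max_left _ _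
      have h2 : |(x-y).2| ≤ ‖x - y‖ := by
        rw [Prod.norm_def]; simp only [Real.norm_eq_abs]; exact le_max_right _ _
      simp only [Prod.smul_fst, Prod.smul_snd, smul_eq_mul, abs_mul,
        abs_of_pos (by positivity : (0:ℝ) < (2*ε)⁻¹)]
      rw [← mul_add]
      rw [inv_mul_le_iff₀ (by positivity), mul_one]
      calc |(x-y).1| + |(x-y).2| ≤ ‖x - y‖ + ‖x - y‖ := add_le_add h1 h2
        _ ≤ ε + ε := by linarith
        _ ≤ 2 * ε := by ring_nf; linarith
    · show (2*ε) • ((2*ε)⁻¹ • (x - y)) = x - y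
      rw [smul_smul, mul_inv_cancel₀ (by positivity : (2*ε) ≠ 0), one_smul]
  have hd' : x - y ∈ (2 * ε) • (B : Set (ℝ × ℝ)) :=
    Set.smul_set_mono hB.2.2.1 hd
  have hmem : x ∈ (1:ℝ) • (B : Set (ℝ × ℝ)) + (2 * ε) • (B : Set (ℝ × ℝ)) := by
    refine ⟨y, by rwa [one_smul], x - y, hd', by module⟩
  rwa [← Convex.add_smul hB.1 zero_le_one (by positivity : (0:ℝ) ≤ 2*ε)] at hmem

lemma deltaLat_close_est {A B : NonemptyCompacts (ℝ × ℝ)} (hA : A ∈ NClass) (hB : B ∈ NClass)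
    {ε : ℝ} (hε : 0 < ε) (h : dist A B < ε) :
    deltaLat (A : Set (ℝ × ℝ)) ≤ (1 + 2*ε) ^ 4 * deltaLat (B : Set (ℝ × ℝ)) := by
  refine key_estimate (nclass_cscd hA) (nclass_cscd hB) (by linarith) ?_ ?_
  · exact subset_smul_of_close hB hε h
  · exact subset_smul_of_close hA hε (by rwa [dist_comm])

lemma continuousOn_deltaLat :
    ContinuousOn (fun A : NonemptyCompacts (ℝ × ℝ) => deltaLat (A : Set (ℝ × ℝ))) NClass := by
  rw [Metric.continuousOn_iff]
  intro A hA ε' hε'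
  refine ⟨min 1 (ε'/100), by positivity, ?_⟩
  intro B hB hd
  set δ := min 1 (ε'/100) with hδ
  have hδ0 : 0 < δ := by positivity
  have hδ1 : δ ≤ 1 := min_le_left _ _
  have hδε : δ ≤ ε'/100 := min_le_right _ _
  have e1 : deltaLat (B : Set (ℝ×ℝ)) ≤ (1 + 2*δ) ^ 4 * deltaLat (A : Set (ℝ×ℝ)) :=
    deltaLat_close_est hB hA hδ0 hd
  have e2 : deltaLat (A : Set (ℝ×ℝ)) ≤ (1 + 2*δ) ^ 4 * deltaLat (B : Set (ℝ×ℝ)) :=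
    deltaLat_close_est hA hB hδ0 (by rwa [dist_comm])
  have hA0 := deltaLat_nonneg (A : Set (ℝ×ℝ))
  have hB0 := deltaLat_nonneg (B : Set (ℝ×ℝ))
  have hA1 := deltaLat_le_one (nclass_cscd hA)
  have hB1 := deltaLat_le_one (nclass_cscd hB)
  have hpow : (1 + 2*δ) ^ 4 ≤ 1 + 80 * δ := by
    have h2 : δ^2 ≤ δ := by nlinarith
    have h3 : δ^3 ≤ δ^2 := by nlinarith
    have h4 : δ^4 ≤ δ^3 := by nlinarith
    nlinarith [h2, h3, h4]
  rw [Real.dist_eq, abs_sub_lt_iff]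
  constructor
  · nlinarith
  · nlinarith


/-- There exists a centrally symmetric convex domain `K₀` realizing the lower
bound `δ_min`: `δ_lat(K₀) ≤ δ_lat(K)` for every centrally symmetric convex domain `K`. -/
theorem exists_miserly_domain :
    ∃ K₀ : Set (ℝ × ℝ), IsCSCD K₀ ∧ ∀ K : Set (ℝ × ℝ), IsCSCD K → deltaLat K₀ ≤ deltaLat K := by
  obtain ⟨A₀, hA₀, hmin⟩ := isCompact_NClass.exists_isMinOn ⟨_, Qsq_mem_NClass⟩
    continuousOn_deltaLat
  refine ⟨(A₀ : Set (ℝ × ℝ)), nclass_cscd hA₀, ?_⟩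
  intro K hK
  obtain ⟨K', ⟨T, rfl⟩, hK'c, hD, hQ⟩ := exists_normalization hK
  have hne : (⇑T '' K).Nonempty := by
    obtain ⟨x, hx⟩ := hK'c.2.2.1
    exact ⟨x, interior_subset hx⟩
  let B : NonemptyCompacts (ℝ × ℝ) := ⟨⟨⇑T '' K, hK'c.2.1⟩, hne⟩
  have hBN : B ∈ NClass := ⟨hK'c.1, hK'c.2.2.2, hD, hQ⟩
  calc deltaLat (A₀ : Set (ℝ × ℝ)) ≤ deltaLat (B : Set (ℝ × ℝ)) := hmin hBN
    _ = deltaLat (⇑T '' K) := rfl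
    _ = deltaLat K := deltaLat_image T K
end
end

section
/- Let G be a balanced hexagon of a centrally symmetric convex domain K centered at the origin, with vertices w₀,…,w₅ in counterclockwise cyclic convex position satisfying w_{j+3} = −w_j, and midpoints u_j = (w_j + w_{j+1})/2 (indices mod 6). Then: (i) u_j + u_{j+2} + u_{j+4} = 0 for all j; (ii) u_{j+3} = −u_j for all j; (iii) the area of G equals 4/3 times the area of the hexagon H = convexHull{u₀,…,u₅}; (iv) the area of G equals 8 times the area of the triangle with vertices 0, u_j, u_{j+2}, i.e., area(G) = 4·(u_j ∧ u_{j+2}), where v ∧ w denotes the determinant of the 2×2 matrix with columns v and w. -/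
open MeasureTheory

set_option maxHeartbeats 2000000

noncomputable section

/-- `w : ZMod 6 → ℝ × ℝ` lists, in counterclockwise cyclic order, the vertices of
a balanced hexagon of `K`. -/
def IsBalancedHexagon (K : Set (ℝ × ℝ)) (w : ZMod 6 → ℝ × ℝ) : Prop :=
  (∀ j, w (j + 3) = -w j) ∧
  (∀ j, 0 ≤ wedge (w (j + 1) - w j) (w (j + 2) - w (j + 1))) ∧
  K ⊆ convexHull ℝ (Set.range w) ∧
  (∀ j, midpoint ℝ (w j) (w (j + 1)) ∈ frontier K)

section Aux

open Set

lemma midpoint_pair (x y : ℝ × ℝ) : midpoint ℝ x y = ((x.1 + y.1)/2, (x.2 + y.2)/2) := by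
  rw [midpoint_eq_smul_add]
  simp [Prod.ext_iff, Prod.smul_fst, Prod.smul_snd, invOf_eq_inv]
  constructor <;> ring

def wedgeL (v : ℝ × ℝ) : (ℝ × ℝ) →ₗ[ℝ] ℝ where
  toFun x := wedge v x
  map_add' p q := by simp [wedge]; ring
  map_smul' r p := by simp [wedge]; ring

lemma wedge_swap (v w : ℝ × ℝ) : wedge v w = -wedge w v := by simp [wedge]; ring
lemma wedge_self (v : ℝ × ℝ) : wedge v v = 0 := by simp [wedge]; ring
lemma wedge_zero_right (v : ℝ × ℝ) : wedge v 0 = 0 := by simp [wedge]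
lemma wedge_zero_left (v : ℝ × ℝ) : wedge 0 v = 0 := by simp [wedge]
lemma wedge_neg_left (v w : ℝ × ℝ) : wedge (-v) w = -wedge v w := by
  simp only [wedge, Prod.fst_neg, Prod.snd_neg]; ring
lemma wedge_neg_right (v w : ℝ × ℝ) : wedge v (-w) = -wedge v w := by
  simp only [wedge, Prod.fst_neg, Prod.snd_neg]; ring
lemma wedge_neg_neg (v w : ℝ × ℝ) : wedge (-v) (-w) = wedge v w := by
  simp only [wedge, Prod.fst_neg, Prod.snd_neg]; ring
lemma wedge_sub_left (a b y : ℝ × ℝ) : wedge (a - b) y = wedge a y - wedge b y := by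
  simp [wedge, Prod.fst_sub, Prod.snd_sub]; ring
lemma wedge_smul_add (v p q : ℝ × ℝ) (α β : ℝ) :
    wedge v (α • p + β • q) = α * wedge v p + β * wedge v q := by
  simp [wedge, Prod.fst_add, Prod.snd_add, Prod.smul_fst, Prod.smul_snd]; ring

lemma wedge_level_null (v : ℝ × ℝ) (hv : v ≠ 0) (c : ℝ) :
    volume {x : ℝ × ℝ | wedge v x = c} = 0 := by
  have hvc : v.1 ≠ 0 ∨ v.2 ≠ 0 := by
    by_contra h; push_neg at h; exact hv (Prod.ext h.1 h.2)
  have hn : 0 < v.1 ^ 2 + v.2 ^ 2 := by rcases hvc with h | h <;> positivity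
  set n := v.1 ^ 2 + v.2 ^ 2 with hn'
  set x₀ : ℝ × ℝ := (-(v.2) * c / n, v.1 * c / n) with hx₀
  have hshift : ∀ y : ℝ × ℝ, wedge v (y + x₀) = wedge v y + c := by
    intro y
    simp only [wedge, Prod.fst_add, Prod.snd_add, x₀]
    field_simp
    ring
  have key : ((fun y : ℝ × ℝ => y + x₀) ⁻¹' {x : ℝ × ℝ | wedge v x = c}) =
      {y : ℝ × ℝ | wedge v y = 0} := by
    ext y
    simp only [mem_preimage, mem_setOf_eq, hshift]
    constructor <;> intro h <;> linarith
  have h0 : volume {y : ℝ × ℝ | wedge v y = 0} = 0 := by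
    have hker : {y : ℝ × ℝ | wedge v y = 0} = (LinearMap.ker (wedgeL v) : Set (ℝ × ℝ)) := by
      ext y; simp [LinearMap.mem_ker, wedgeL]
    rw [hker]
    apply Measure.addHaar_submodule
    intro htop
    have := (Submodule.eq_top_iff' (p := LinearMap.ker (wedgeL v))).mp htop (-v.2, v.1)
    rw [LinearMap.mem_ker] at this
    simp only [wedgeL, LinearMap.coe_mk, AddHom.coe_mk, wedge] at this
    nlinarith
  calc volume {x : ℝ × ℝ | wedge v x = c}
      = volume ((fun y : ℝ × ℝ => y + x₀) ⁻¹' {x : ℝ × ℝ | wedge v x = c}) :=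
        (measure_preimage_add_right _ _ _).symm
    _ = 0 := by rw [key]; exact h0

lemma mem_tri {a b x : ℝ × ℝ} {α β : ℝ} (hα : 0 ≤ α) (hβ : 0 ≤ β) (hs : α + β ≤ 1)
    (hx : x = α • a + β • b) : x ∈ convexHull ℝ ({0, a, b} : Set (ℝ × ℝ)) := by
  have h0 : (0 : ℝ × ℝ) ∈ convexHull ℝ ({0, a, b} : Set (ℝ × ℝ)) :=
    subset_convexHull _ _ (by simp)
  have ha : a ∈ convexHull ℝ ({0, a, b} : Set (ℝ × ℝ)) := subset_convexHull _ _ (by simp)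
  have hb : b ∈ convexHull ℝ ({0, a, b} : Set (ℝ × ℝ)) := subset_convexHull _ _ (by simp)
  have hc : Convex ℝ (convexHull ℝ ({0, a, b} : Set (ℝ × ℝ))) := convex_convexHull _ _
  rcases eq_or_lt_of_le (add_nonneg hα hβ) with ht | ht
  · have hα0 : α = 0 := by linarith
    have hβ0 : β = 0 := by linarith
    rw [hx, hα0, hβ0]; simpa using h0
  · set t := α + β with htdef
    have hm : (α / t) • a + (β / t) • b ∈ convexHull ℝ ({0, a, b} : Set (ℝ × ℝ)) :=
      hc ha hb (div_nonneg hα ht.le) (div_nonneg hβ ht.le) (by field_simp; exact htdef.symm)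
    have := hc h0 hm (by linarith : (0:ℝ) ≤ 1 - t) ht.le (by ring)
    rw [smul_zero, zero_add, smul_add, smul_smul, smul_smul] at this
    rw [hx]
    convert this using 2 <;> field_simp

def stdTri : Set (ℝ × ℝ) := {p : ℝ × ℝ | 0 ≤ p.1 ∧ 0 ≤ p.2 ∧ p.1 + p.2 ≤ 1}

lemma isLinearMap_first : IsLinearMap ℝ (fun p : ℝ × ℝ => p.1) := ⟨fun _ _ => rfl, fun _ _ => rfl⟩
lemma isLinearMap_second : IsLinearMap ℝ (fun p : ℝ × ℝ => p.2) := ⟨fun _ _ => rfl, fun _ _ => rfl⟩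
lemma isLinearMap_sum : IsLinearMap ℝ (fun p : ℝ × ℝ => p.1 + p.2) :=
  ⟨fun _ _ => by simp [Prod.fst_add, Prod.snd_add]; ring, fun c _ => by simp [Prod.smul_fst]; ring⟩

lemma stdTri_convex : Convex ℝ stdTri := by
  have h1 : Convex ℝ {p : ℝ × ℝ | 0 ≤ p.1} := convex_halfSpace_ge isLinearMap_first 0
  have h2 : Convex ℝ {p : ℝ × ℝ | 0 ≤ p.2} := convex_halfSpace_ge isLinearMap_second 0
  have h3 : Convex ℝ {p : ℝ × ℝ | p.1 + p.2 ≤ 1} := convex_halfSpace_le isLinearMap_sum 1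
  have : stdTri = {p : ℝ × ℝ | 0 ≤ p.1} ∩ ({p : ℝ × ℝ | 0 ≤ p.2} ∩ {p : ℝ × ℝ | p.1 + p.2 ≤ 1}) := by
    ext p; simp [stdTri, and_assoc]
  rw [this]; exact h1.inter (h2.inter h3)

lemma hull_eq_stdTri :
    convexHull ℝ ({0, ((1:ℝ),(0:ℝ)), ((0:ℝ),(1:ℝ))} : Set (ℝ × ℝ)) = stdTri := by
  apply Subset.antisymm
  · apply convexHull_min _ stdTri_convex
    intro p hp
    rcases hp with h | h | h <;> subst h <;> norm_num [stdTri]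
  · intro p hp
    obtain ⟨h1, h2, h3⟩ := hp
    exact mem_tri h1 h2 h3 (by apply Prod.ext <;> simp)

lemma volume_stdTri : volume stdTri = ENNReal.ofReal (1/2) := by
  have hreg : regionBetween (fun _ : ℝ => (0:ℝ)) (fun x : ℝ => 1 - x) (Ioo 0 1) ⊆ stdTri := by
    rintro ⟨x, y⟩ ⟨hx, hy⟩
    simp only [mem_Ioo] at hx hy
    exact ⟨hx.1.le, hy.1.le, by simp at hy ⊢; linarith [hy.2]⟩
  have hsub : stdTri ⊆ regionBetween (fun _ : ℝ => (0:ℝ)) (fun x : ℝ => 1 - x) (Ioo 0 1)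
      ∪ ({p : ℝ × ℝ | p.1 = 0} ∪ {p : ℝ × ℝ | p.2 = 0} ∪ {p : ℝ × ℝ | p.1 + p.2 = 1}) := by
    rintro ⟨x, y⟩ ⟨h1, h2, h3⟩
    rcases eq_or_lt_of_le h1 with h | h
    · exact Or.inr (Or.inl (Or.inl h.symm))
    rcases eq_or_lt_of_le h2 with h' | h'
    · exact Or.inr (Or.inl (Or.inr h'.symm))
    rcases eq_or_lt_of_le h3 with h'' | h''
    · exact Or.inr (Or.inr h'')
    · exact Or.inl ⟨⟨h, by linarith⟩, ⟨h', by simpa using by linarith⟩⟩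
  have hnull1 : volume ({p : ℝ × ℝ | p.1 = 0}) = 0 := by
    have : {p : ℝ × ℝ | p.1 = 0} = ({0} : Set ℝ) ×ˢ (univ : Set ℝ) := by
      ext ⟨x, y⟩; simp [Set.mem_prod, eq_comm]
    rw [this, show (volume : Measure (ℝ × ℝ)) = (volume : Measure ℝ).prod volume from rfl,
      Measure.prod_prod]
    simp
  have hnull2 : volume ({p : ℝ × ℝ | p.2 = 0}) = 0 := by
    have : {p : ℝ × ℝ | p.2 = 0} = (univ : Set ℝ) ×ˢ ({0} : Set ℝ) := by
      ext ⟨x, y⟩; simp [Set.mem_prod, eq_comm]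
    rw [this, show (volume : Measure (ℝ × ℝ)) = (volume : Measure ℝ).prod volume from rfl,
      Measure.prod_prod]
    simp
  have hnull3 : volume ({p : ℝ × ℝ | p.1 + p.2 = 1}) = 0 := by
    have : {p : ℝ × ℝ | p.1 + p.2 = 1} = {p : ℝ × ℝ | wedge (-1, 1) p = -1} := by
      ext p; simp [wedge]; constructor <;> intro <;> linarith
    rw [this]
    exact wedge_level_null _ (by simp [Prod.ext_iff]) _
  have hrv : volume (regionBetween (fun _ : ℝ => (0:ℝ)) (fun x : ℝ => 1 - x) (Ioo 0 1))
      = ENNReal.ofReal (1/2) := by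
    rw [show (volume : Measure (ℝ × ℝ)) = (volume : Measure ℝ).prod volume from rfl]
    rw [volume_regionBetween_eq_integral]
    · congr 1
      have : ∫ y in Ioo (0:ℝ) 1, ((fun x : ℝ => 1 - x) - fun _ : ℝ => (0:ℝ)) y = 1/2 := by
        simp only [Pi.sub_apply, sub_zero]
        rw [← MeasureTheory.integral_Ioc_eq_integral_Ioo,
          ← intervalIntegral.integral_of_le (by norm_num : (0:ℝ) ≤ 1)]
        have h1 : IntervalIntegrable (fun _ : ℝ => (1:ℝ)) volume 0 1 := intervalIntegrable_const
        have h2 : IntervalIntegrable (fun x : ℝ => x) volume 0 1 :=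
          intervalIntegral.intervalIntegrable_id
        rw [intervalIntegral.integral_sub h1 h2]
        simp [integral_id]
        norm_num
      rw [this]
    · exact (continuous_const.integrableOn_Icc.mono_set Ioo_subset_Icc_self)
    · exact ((continuous_const.sub continuous_id).integrableOn_Icc.mono_set Ioo_subset_Icc_self)
    · exact measurableSet_Ioo
    · intro x hx; simp at hx ⊢; linarith [hx.2]
  apply le_antisymm
  · calc volume stdTri ≤ volume (regionBetween (fun _ : ℝ => (0:ℝ)) (fun x : ℝ => 1 - x) (Ioo 0 1))
        + volume ({p : ℝ × ℝ | p.1 = 0} ∪ {p : ℝ × ℝ | p.2 = 0} ∪ {p : ℝ × ℝ | p.1 + p.2 = 1}) :=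
          le_trans (measure_mono hsub) (measure_union_le _ _)
      _ ≤ ENNReal.ofReal (1/2) + 0 := by
          refine add_le_add hrv.le ?_
          refine le_trans (measure_union_le _ _) ?_
          rw [hnull3]
          refine le_trans (add_le_add (measure_union_le _ _) le_rfl) ?_
          simp [hnull1, hnull2]
      _ = ENNReal.ofReal (1/2) := by simp
  · rw [← hrv]; exact measure_mono hreg

def Lmap (a b : ℝ × ℝ) : (ℝ × ℝ) →ₗ[ℝ] (ℝ × ℝ) where
  toFun p := p.1 • a + p.2 • b
  map_add' p q := by simp [Prod.ext_iff]; constructor <;> ring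
  map_smul' r p := by simp [Prod.ext_iff]; constructor <;> ring

lemma Lmap_det (a b : ℝ × ℝ) : LinearMap.det (Lmap a b) = wedge a b := by
  rw [← LinearMap.det_toMatrix (Module.Basis.finTwoProd ℝ), Matrix.det_fin_two]
  simp [LinearMap.toMatrix_apply, Lmap, Module.Basis.finTwoProd, wedge]
  ring

lemma volume_triangle (a b : ℝ × ℝ) :
    volume (convexHull ℝ ({0, a, b} : Set (ℝ × ℝ))) = ENNReal.ofReal (|wedge a b| / 2) := by
  have himg : Lmap a b '' (convexHull ℝ ({0, ((1:ℝ),(0:ℝ)), ((0:ℝ),(1:ℝ))} : Set (ℝ × ℝ)))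
      = convexHull ℝ ({0, a, b} : Set (ℝ × ℝ)) := by
    rw [LinearMap.image_convexHull]
    congr 1
    rw [Set.image_insert_eq, Set.image_insert_eq, Set.image_singleton]
    simp [Lmap]
  rw [← himg, Measure.addHaar_image_linearMap, Lmap_det, hull_eq_stdTri, volume_stdTri,
    ← ENNReal.ofReal_mul (abs_nonneg _)]
  ring_nf

lemma cramer (p q x : ℝ × ℝ) (h : wedge p q ≠ 0) :
    x = (wedge x q / wedge p q) • p + (wedge p x / wedge p q) • q := by
  simp only [wedge] at h ⊢
  apply Prod.ext <;>
    simp only [Prod.fst_add, Prod.snd_add, Prod.smul_fst, Prod.smul_snd, smul_eq_mul] <;>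
    rw [div_mul_eq_mul_div, div_mul_eq_mul_div, ← add_div, eq_div_iff h] <;> ring

lemma indep {p q d : ℝ × ℝ} (hS : wedge p q ≠ 0) (hX : wedge d p = 0) (hY : wedge d q = 0) :
    d = 0 := by
  simp only [wedge] at hS hX hY
  have h1 : d.1 * (p.1 * q.2 - p.2 * q.1) = 0 := by linear_combination p.1 * hY - q.1 * hX
  have h2 : d.2 * (p.1 * q.2 - p.2 * q.1) = 0 := by linear_combination p.2 * hY - q.2 * hX
  have hd1 : d.1 = 0 := by
    rcases mul_eq_zero.mp h1 with h | h
    · exact h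
    · exact absurd h hS
  have hd2 : d.2 = 0 := by
    rcases mul_eq_zero.mp h2 with h | h
    · exact h
    · exact absurd h hS
  exact Prod.ext hd1 hd2

lemma wedge_span {v x : ℝ × ℝ} (hv : v ≠ 0) (h : wedge v x = 0) :
    x ∈ Submodule.span ℝ ({v} : Set (ℝ × ℝ)) := by
  rw [Submodule.mem_span_singleton]
  simp only [wedge] at h
  by_cases h1 : v.1 ≠ 0
  · refine ⟨x.1 / v.1, Prod.ext ?_ ?_⟩
    · simp only [Prod.smul_fst, smul_eq_mul]; field_simp
    · simp only [Prod.smul_snd, smul_eq_mul]; field_simp; linear_combination -h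
  · push_neg at h1
    have h2 : v.2 ≠ 0 := fun h2 => hv (Prod.ext h1 h2)
    refine ⟨x.2 / v.2, Prod.ext ?_ ?_⟩
    · simp only [Prod.smul_fst, smul_eq_mul]; field_simp; linear_combination h
    · simp only [Prod.smul_snd, smul_eq_mul]; field_simp

end Aux

section HexArea

open Set

lemma hex_area (w : ZMod 6 → ℝ × ℝ)
    (h1 : ∀ j, w (j + 3) = -w j)
    (h2 : ∀ j k, wedge (w j) (w k) + wedge (w k) (w (j + 1)) ≤ wedge (w j) (w (j + 1)))
    (h3 : ∀ j, 0 ≤ wedge (w j) (w (j + 2)))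
    (h4 : ∀ j, w j ≠ 0)
    (h5 : ∀ j, wedge (w j) (w (j + 1)) = 0 → w (j + 1) = w j)
    (h6 : ∀ j, wedge (w j) (w (j + 1)) = 0 →
      0 < wedge (w (j + 1)) (w (j + 2)) ∧ 0 < wedge (w (j + 2)) (w (j + 3))) :
    volume (convexHull ℝ (Set.range w)) =
      ENNReal.ofReal (wedge (w 0) (w 1) + wedge (w 1) (w 2) + wedge (w 2) (w 3)) := by
  set G := convexHull ℝ (Set.range w) with hG
  set T : ZMod 6 → Set (ℝ × ℝ) := fun j => convexHull ℝ ({0, w j, w (j + 1)} : Set (ℝ × ℝ))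
    with hT
  have hW : ∀ j, 0 ≤ wedge (w j) (w (j + 1)) := by
    intro j
    have := h2 j (j + 3)
    rw [h1 j, wedge_neg_right, wedge_self, wedge_neg_left] at this
    linarith
  have hzero : (0 : ℝ × ℝ) ∈ G := by
    have h30 : w 3 = -w 0 := by have := h1 0; rwa [show (0 : ZMod 6) + 3 = 3 by decide] at this
    have hw0 : w 0 ∈ G := subset_convexHull ℝ _ ⟨0, rfl⟩
    have hw3 : w 3 ∈ G := subset_convexHull ℝ _ ⟨3, rfl⟩
    have hcomb := (convex_convexHull ℝ (Set.range w)) hw0 hw3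
      (by norm_num : (0:ℝ) ≤ 1/2) (by norm_num : (0:ℝ) ≤ 1/2) (by norm_num)
    rw [h30, smul_neg, add_neg_cancel] at hcomb
    exact hcomb
  have hTG : ∀ j, T j ⊆ G := by
    intro j
    apply convexHull_min _ (convex_convexHull ℝ _)
    rintro y (rfl | rfl | rfl)
    · exact hzero
    · exact subset_convexHull ℝ _ ⟨j, rfl⟩
    · exact subset_convexHull ℝ _ ⟨j + 1, rfl⟩
  have hsec : ∀ j, ∀ x ∈ T j, 0 ≤ wedge (w j) x ∧ 0 ≤ wedge x (w (j + 1)) := by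
    intro j
    have hsub : T j ⊆ {x | 0 ≤ wedge (w j) x} ∩ {x | 0 ≤ wedge x (w (j + 1))} := by
      apply convexHull_min
      · rintro y (rfl | rfl | rfl)
        · constructor
          · simp [wedge_zero_right]
          · simp [wedge_zero_left]
        · exact ⟨le_of_eq (wedge_self _).symm, hW j⟩
        · exact ⟨hW j, le_of_eq (wedge_self _).symm⟩
      · apply Convex.inter
        · exact convex_halfSpace_ge (wedgeL (w j)).isLinear 0
        · have : {x : ℝ × ℝ | 0 ≤ wedge x (w (j + 1))}
              = {x : ℝ × ℝ | wedgeL (w (j + 1)) x ≤ 0} := by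
            ext x
            simp only [mem_setOf_eq, wedgeL, LinearMap.coe_mk, AddHom.coe_mk]
            rw [wedge_swap]
            constructor <;> intro <;> linarith
          rw [this]
          exact convex_halfSpace_le (wedgeL (w (j + 1))).isLinear 0
    intro x hx
    exact hsub hx
  have hbound : ∀ j, ∀ x ∈ G, wedge (w j) x + wedge x (w (j + 1)) ≤ wedge (w j) (w (j + 1)) := by
    intro j x hxG
    have hsubC : G ⊆ {y | wedgeL (w j - w (j + 1)) y ≤ wedge (w j) (w (j + 1))} := by
      apply convexHull_min
      · rintro y ⟨k, rfl⟩
        have hh := h2 j k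
        have hsw : wedge (w k) (w (j + 1)) = -wedge (w (j + 1)) (w k) := wedge_swap _ _
        simp only [mem_setOf_eq, wedgeL, LinearMap.coe_mk, AddHom.coe_mk, wedge_sub_left]
        linarith
      · exact convex_halfSpace_le (wedgeL _).isLinear _
    have := hsubC hxG
    simp only [mem_setOf_eq, wedgeL, LinearMap.coe_mk, AddHom.coe_mk, wedge_sub_left] at this
    have hsw : wedge x (w (j + 1)) = -wedge (w (j + 1)) x := wedge_swap _ _
    linarith
  have hmem : ∀ j x, 0 < wedge (w j) (w (j + 1)) → x ∈ G → 0 ≤ wedge (w j) x →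
      0 ≤ wedge x (w (j + 1)) → x ∈ T j := by
    intro j x hpos hxG hs1 hs2
    refine mem_tri (div_nonneg hs2 hpos.le) (div_nonneg hs1 hpos.le) ?_
      (cramer _ _ _ hpos.ne')
    rw [← add_div, div_le_one hpos]
    linarith [hbound j x hxG]
  have hrep : ∀ j x, 0 < wedge (w j) (w (j + 1)) → x ∈ T j →
      ∃ α β : ℝ, 0 ≤ α ∧ 0 ≤ β ∧ x = α • w j + β • w (j + 1) := by
    intro j x hpos hx
    obtain ⟨hs1, hs2⟩ := hsec j x hx
    exact ⟨_, _, div_nonneg hs2 hpos.le, div_nonneg hs1 hpos.le, cramer _ _ _ hpos.ne'⟩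
  have hcov : ∀ x : ℝ × ℝ, ∃ j, 0 < wedge (w j) (w (j + 1)) ∧ 0 ≤ wedge (w j) x ∧
      0 ≤ wedge x (w (j + 1)) := by
    intro x
    have hv3 : ∀ j, wedge (w (j + 3)) x = -wedge (w j) x := by
      intro j; rw [h1 j, wedge_neg_left]
    have base : ∃ j, 0 ≤ wedge (w j) x ∧ wedge (w (j + 1)) x ≤ 0 := by
      rcases le_or_gt 0 (wedge (w 0) x) with h0 | h0
      · rcases le_or_gt (wedge (w 1) x) 0 with ha | ha
        · exact ⟨0, h0, by rwa [show (0 : ZMod 6) + 1 = 1 by decide]⟩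
        rcases le_or_gt (wedge (w 2) x) 0 with hb | hb
        · exact ⟨1, ha.le, by rwa [show (1 : ZMod 6) + 1 = 2 by decide]⟩
        · refine ⟨2, hb.le, ?_⟩
          rw [show (2 : ZMod 6) + 1 = 3 by decide, show (3 : ZMod 6) = 0 + 3 by decide, hv3 0]
          linarith
      · have h3' : 0 ≤ wedge (w 3) x := by
          rw [show (3 : ZMod 6) = 0 + 3 by decide, hv3 0]; linarith
        rcases le_or_gt (wedge (w 4) x) 0 with ha | ha
        · exact ⟨3, h3', by rwa [show (3 : ZMod 6) + 1 = 4 by decide]⟩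
        rcases le_or_gt (wedge (w 5) x) 0 with hb | hb
        · exact ⟨4, ha.le, by rwa [show (4 : ZMod 6) + 1 = 5 by decide]⟩
        · refine ⟨5, hb.le, ?_⟩
          rw [show (5 : ZMod 6) + 1 = 0 by decide]
          linarith
    obtain ⟨j, hj0, hj1⟩ := base
    have hswx : ∀ m, wedge x (w m) = -wedge (w m) x := fun m => wedge_swap _ _
    rcases (hW j).lt_or_eq with hpos | heq
    · exact ⟨j, hpos, hj0, by rw [hswx]; linarith⟩
    · have heq' : wedge (w j) (w (j + 1)) = 0 := heq.symm
      have h5j := h5 j heq'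
      have hvj1 : wedge (w (j + 1)) x = wedge (w j) x := by rw [h5j]
      have hvj0 : wedge (w j) x = 0 := le_antisymm (by linarith) (by linarith)
      obtain ⟨hp1, hp2⟩ := h6 j heq'
      rcases le_or_gt (wedge (w (j + 2)) x) 0 with hc | hc
      · refine ⟨j + 1, ?_, ?_, ?_⟩
        · rwa [show j + 1 + 1 = j + 2 by ring]
        · rw [hvj1, hvj0]
        · rw [show j + 1 + 1 = j + 2 by ring, hswx]; linarith
      · refine ⟨j + 2, ?_, hc.le, ?_⟩
        · rwa [show j + 2 + 1 = j + 3 by ring]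
        · rw [show j + 2 + 1 = j + 3 by ring, hswx, hv3 j, hvj0]
          norm_num
  have hcup : G = ⋃ j, T j := by
    apply Subset.antisymm
    · intro x hx
      obtain ⟨j, hA, hB, hC⟩ := hcov x
      exact Set.mem_iUnion.mpr ⟨j, hmem j x hA hx hB hC⟩
    · exact Set.iUnion_subset hTG
  have nullsub : ∀ (A : Set (ℝ × ℝ)) (m : ZMod 6), A ⊆ {x | wedge (w m) x = 0} →
      volume A = 0 := fun A m h => measure_mono_null h (wedge_level_null (w m) (h4 m) 0)
  have hdeg : ∀ j, wedge (w j) (w (j + 1)) = 0 → volume (T j) = 0 := by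
    intro j hj
    refine nullsub _ j ?_
    apply convexHull_min
    · rintro y (rfl | rfl | rfl)
      · exact wedge_zero_right _
      · exact wedge_self _
      · rw [h5 j hj]; exact wedge_self _
    · exact convex_hyperplane (wedgeL (w j)).isLinear 0
  have main2 : ∀ a : ZMod 6, 0 < wedge (w a) (w (a + 1)) → ∀ x, x ∈ T a → x ∈ T (a + 2) →
      wedge (w (a + 2)) x = 0 := by
    intro a ha x hxa hxa2
    obtain ⟨α, β, hα, hβ, hxeq⟩ := hrep a x ha hxa
    have hup : wedge (w (a + 2)) x ≤ 0 := by
      rw [hxeq, wedge_smul_add]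
      have e1 : wedge (w (a + 2)) (w a) ≤ 0 := by
        have := h3 a; rw [wedge_swap]; linarith
      have e2 : wedge (w (a + 2)) (w (a + 1)) ≤ 0 := by
        have := hW (a + 1); rw [show a + 1 + 1 = a + 2 by ring] at this
        rw [wedge_swap]; linarith
      nlinarith
    have hlow : 0 ≤ wedge (w (a + 2)) x := (hsec (a + 2) x hxa2).1
    linarith
  have hdisj : ∀ j k : ZMod 6, j ≠ k → volume (T j ∩ T k) = 0 := by
    intro j k hjk
    rcases (hW j).lt_or_eq with hj | hj
    swap
    · exact measure_mono_null Set.inter_subset_left (hdeg j hj.symm)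
    rcases (hW k).lt_or_eq with hk | hk
    swap
    · exact measure_mono_null Set.inter_subset_right (hdeg k hk.symm)
    have hd : k - j = 1 ∨ k - j = 2 ∨ k - j = 3 ∨ k - j = 4 ∨ k - j = 5 := by
      have h0 : k - j ≠ 0 := sub_ne_zero.mpr (Ne.symm hjk)
      revert h0; generalize k - j = d; revert d; decide
    have hk' : k = j + (k - j) := by ring
    rcases hd with hd | hd | hd | hd | hd <;> rw [hd] at hk' <;> subst hk'
    · refine nullsub _ (j + 1) ?_
      rintro x ⟨hxj, hxk⟩
      simp only [Set.mem_setOf_eq]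
      have e1 : 0 ≤ wedge x (w (j + 1)) := (hsec j x hxj).2
      have e2 : 0 ≤ wedge (w (j + 1)) x := (hsec (j + 1) x hxk).1
      rw [wedge_swap] at e1
      linarith
    · refine nullsub _ (j + 2) ?_
      rintro x ⟨hxj, hxk⟩
      simp only [Set.mem_setOf_eq]
      exact main2 j hj x hxj hxk
    · refine nullsub _ j ?_
      rintro x ⟨hxj, hxk⟩
      simp only [Set.mem_setOf_eq]
      have e1 : 0 ≤ wedge (w j) x := (hsec j x hxj).1
      have e2 : 0 ≤ wedge (w (j + 3)) x := (hsec (j + 3) x hxk).1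
      rw [h1 j, wedge_neg_left] at e2
      linarith
    · refine nullsub _ (j + 4 + 2) ?_
      rintro x ⟨hxj, hxk⟩
      simp only [Set.mem_setOf_eq]
      have hj' : j = j + 4 + 2 := by rw [add_assoc, show (4 : ZMod 6) + 2 = 0 by decide, add_zero]
      rw [hj'] at hxj
      exact main2 (j + 4) hk x hxk hxj
    · refine nullsub _ j ?_
      rintro x ⟨hxj, hxk⟩
      simp only [Set.mem_setOf_eq]
      have e1 : 0 ≤ wedge x (w (j + 5 + 1)) := (hsec (j + 5) x hxk).2
      rw [add_assoc, show (5 : ZMod 6) + 1 = 0 by decide, add_zero, wedge_swap] at e1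
      have e2 : 0 ≤ wedge (w j) x := (hsec j x hxj).1
      linarith
  have hTmeas : ∀ j, NullMeasurableSet (T j) volume := by
    intro j
    have hfin : ({0, w j, w (j + 1)} : Set (ℝ × ℝ)).Finite := by
      apply Set.Finite.insert; apply Set.Finite.insert; exact Set.finite_singleton _
    exact (hfin.isCompact_convexHull ℝ).isClosed.measurableSet.nullMeasurableSet
  have hvol : volume G = ∑' j : ZMod 6, volume (T j) := by
    rw [hcup]
    exact measure_iUnion₀ (fun j k hjk => hdisj j k hjk) hTmeas
  rw [hvol, tsum_fintype]
  have hTvol : ∀ j, volume (T j) = ENNReal.ofReal (wedge (w j) (w (j + 1)) / 2) := by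
    intro j
    rw [hT]
    simp only
    rw [volume_triangle, abs_of_nonneg (hW j)]
  have hsum : ∑ j : ZMod 6, volume (T j)
      = volume (T 0) + volume (T 1) + volume (T 2) + volume (T 3) + volume (T 4)
        + volume (T 5) := by
    show ∑ j : Fin 6, volume (T j) = _
    rw [Fin.sum_univ_six]; rfl
  rw [hsum]
  have e30 : w 3 = -w 0 := by have := h1 0; rwa [show (0 : ZMod 6) + 3 = 3 by decide] at this
  have e41 : w 4 = -w 1 := by have := h1 1; rwa [show (1 : ZMod 6) + 3 = 4 by decide] at this
  have e52 : w 5 = -w 2 := by have := h1 2; rwa [show (2 : ZMod 6) + 3 = 5 by decide] at this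
  have v0 := hTvol 0; rw [show (0 : ZMod 6) + 1 = 1 by decide] at v0
  have v1 := hTvol 1; rw [show (1 : ZMod 6) + 1 = 2 by decide] at v1
  have v2 := hTvol 2; rw [show (2 : ZMod 6) + 1 = 3 by decide] at v2
  have v3 := hTvol 3; rw [show (3 : ZMod 6) + 1 = 4 by decide, e30, e41, wedge_neg_neg] at v3
  have v4 := hTvol 4; rw [show (4 : ZMod 6) + 1 = 5 by decide, e41, e52, wedge_neg_neg] at v4
  have v5 := hTvol 5
  rw [show (5 : ZMod 6) + 1 = 0 by decide] at v5
  have h52 : wedge (w 5) (w 0) = wedge (w 2) (w 3) := by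
    rw [e52, e30]
    simp only [wedge, Prod.fst_neg, Prod.snd_neg]
    ring
  rw [h52] at v5
  rw [v0, v1, v2, v3, v4, v5]
  have q0 := hW 0; rw [show (0 : ZMod 6) + 1 = 1 by decide] at q0
  have q1 := hW 1; rw [show (1 : ZMod 6) + 1 = 2 by decide] at q1
  have q2 := hW 2; rw [show (2 : ZMod 6) + 1 = 3 by decide] at q2
  rw [← ENNReal.ofReal_add (by linarith) (by linarith),
    ← ENNReal.ofReal_add (by linarith) (by linarith),
    ← ENNReal.ofReal_add (by linarith) (by linarith),
    ← ENNReal.ofReal_add (by linarith) (by linarith),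
    ← ENNReal.ofReal_add (by linarith) (by linarith)]
  congr 1
  ring

end HexArea

section Idx
lemma i01 : (0 : ZMod 6) + 1 = 1 := by decide
lemma i11 : (1 : ZMod 6) + 1 = 2 := by decide
lemma i21 : (2 : ZMod 6) + 1 = 3 := by decide
lemma i31 : (3 : ZMod 6) + 1 = 4 := by decide
lemma i41 : (4 : ZMod 6) + 1 = 5 := by decide
lemma i51 : (5 : ZMod 6) + 1 = 0 := by decide
lemma i02 : (0 : ZMod 6) + 2 = 2 := by decide
lemma i12 : (1 : ZMod 6) + 2 = 3 := by decide
lemma i22 : (2 : ZMod 6) + 2 = 4 := by decide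
lemma i32 : (3 : ZMod 6) + 2 = 5 := by decide
lemma i42 : (4 : ZMod 6) + 2 = 0 := by decide
lemma i52 : (5 : ZMod 6) + 2 = 1 := by decide
lemma i03 : (0 : ZMod 6) + 3 = 3 := by decide
lemma i13 : (1 : ZMod 6) + 3 = 4 := by decide
lemma i23 : (2 : ZMod 6) + 3 = 5 := by decide
lemma i33 : (3 : ZMod 6) + 3 = 0 := by decide
lemma i43 : (4 : ZMod 6) + 3 = 1 := by decide
lemma i53 : (5 : ZMod 6) + 3 = 2 := by decide
lemma i04 : (0 : ZMod 6) + 4 = 4 := by decide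
end Idx

/-- Properties of the midpoints `u j` of a balanced hexagon `G` of a centrally
symmetric convex domain `K` centered at the origin:
(i) `u j + u (j+2) + u (j+4) = 0`; (ii) `u (j+3) = -u j`;
(iii) `area G = (4/3) · area H` where `H` is the convex hull of the midpoints;
(iv) `area G = 4 · (u j ∧ u (j+2))` (eight times the area of the triangle
`{0, u j, u (j+2)}`). -/
theorem balancedHexagon_midpoints (K : Set (ℝ × ℝ)) (hK : IsCSCD K)
    (w : ZMod 6 → ℝ × ℝ) (hw : IsBalancedHexagon K w)
    (u : ZMod 6 → ℝ × ℝ) (hu : ∀ j, u j = midpoint ℝ (w j) (w (j + 1))) :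
    (∀ j, u j + u (j + 2) + u (j + 4) = 0) ∧
    (∀ j, u (j + 3) = -u j) ∧
    (volume (convexHull ℝ (Set.range w))).toReal =
      (4 / 3) * (volume (convexHull ℝ (Set.range u))).toReal ∧
    (∀ j, (volume (convexHull ℝ (Set.range w))).toReal = 4 * wedge (u j) (u (j + 2))) := by
  obtain ⟨hKconv, hKcomp, hKint, hKsym⟩ := hK
  obtain ⟨hw1, hw2, hw3, hw4⟩ := hw
  have hj6 : ∀ i : ZMod 6, i = 0 ∨ i = 1 ∨ i = 2 ∨ i = 3 ∨ i = 4 ∨ i = 5 := by decide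
  have e30 : w 3 = -w 0 := by have := hw1 0; rwa [i03] at this
  have e41 : w 4 = -w 1 := by have := hw1 1; rwa [i13] at this
  have e52 : w 5 = -w 2 := by have := hw1 2; rwa [i23] at this
  -- part (ii)
  have pii : ∀ j, u (j + 3) = -u j := by
    intro j
    have e4 : w (j + 3 + 1) = -w (j + 1) := by
      rw [show j + 3 + 1 = j + 1 + 3 by ring]; exact hw1 (j + 1)
    rw [hu (j + 3), hu j, e4, hw1 j, midpoint_pair, midpoint_pair]
    simp only [Prod.fst_neg, Prod.snd_neg, Prod.neg_mk, Prod.mk.injEq]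
    constructor <;> ring
  -- part (i)
  have pi1 : ∀ j, u j + u (j + 2) + u (j + 4) = 0 := by
    intro j
    have a3 : w (j + 2 + 1) = -w j := by rw [show j + 2 + 1 = j + 3 by ring]; exact hw1 j
    have a4 : w (j + 4) = -w (j + 1) := by rw [show j + 4 = j + 1 + 3 by ring]; exact hw1 (j + 1)
    have a5 : w (j + 4 + 1) = -w (j + 2) := by
      rw [show j + 4 + 1 = j + 2 + 3 by ring]; exact hw1 (j + 2)
    rw [hu j, hu (j + 2), hu (j + 4), a3, a4, a5, midpoint_pair, midpoint_pair, midpoint_pair]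
    apply Prod.ext <;>
      simp only [Prod.fst_add, Prod.snd_add, Prod.fst_neg, Prod.snd_neg, Prod.fst_zero,
        Prod.snd_zero] <;> ring
  -- u in coordinates
  have u0v : u 0 = (((w 0).1 + (w 1).1)/2, ((w 0).2 + (w 1).2)/2) := by
    rw [hu 0, i01, midpoint_pair]
  have u1v : u 1 = (((w 1).1 + (w 2).1)/2, ((w 1).2 + (w 2).2)/2) := by
    rw [hu 1, i11, midpoint_pair]
  have u2v : u 2 = (((w 2).1 - (w 0).1)/2, ((w 2).2 - (w 0).2)/2) := by
    rw [hu 2, i21, e30, midpoint_pair]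
    simp only [Prod.fst_neg, Prod.snd_neg, Prod.mk.injEq]
    constructor <;> ring
  have u3v : u 3 = ((-(w 0).1 - (w 1).1)/2, (-(w 0).2 - (w 1).2)/2) := by
    have h3 := pii 0; rw [i03] at h3
    rw [h3, u0v, Prod.neg_mk, Prod.mk.injEq]
    constructor <;> ring
  have u4v : u 4 = ((-(w 1).1 - (w 2).1)/2, (-(w 1).2 - (w 2).2)/2) := by
    have h4 := pii 1; rw [i13] at h4
    rw [h4, u1v, Prod.neg_mk, Prod.mk.injEq]
    constructor <;> ring
  have u5v : u 5 = (((w 0).1 - (w 2).1)/2, ((w 0).2 - (w 2).2)/2) := by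
    have h5 := pii 2; rw [i23] at h5
    rw [h5, u2v, Prod.neg_mk, Prod.mk.injEq]
    constructor <;> ring
  -- scalar hypotheses
  have hA' := hw2 0
  rw [i01, i02] at hA'
  simp only [wedge, Prod.fst_sub, Prod.snd_sub] at hA'
  have hB' := hw2 1
  rw [i11, i12, e30] at hB'
  simp only [wedge, Prod.fst_sub, Prod.snd_sub, Prod.fst_neg, Prod.snd_neg] at hB'
  have hC' := hw2 2
  rw [i21, i22, e30, e41] at hC'
  simp only [wedge, Prod.fst_sub, Prod.snd_sub, Prod.fst_neg, Prod.snd_neg] at hC'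
  -- positivity of S
  have hS0 : (0:ℝ) ≤ wedge (u 0) (u 1) := by
    simp only [u0v, u1v, wedge]
    linarith [hA', hB', hC']
  have hSpos : 0 < wedge (u 0) (u 1) := by
    rcases hS0.lt_or_eq with h | h
    · exact h
    exfalso
    have h' : wedge (u 0) (u 1) = 0 := h.symm
    simp only [u0v, u1v, wedge] at h'
    have z01 : wedge (w 0) (w 1) = 0 := by simp only [wedge]; linarith [hA', hB', hC', h']
    have z02 : wedge (w 0) (w 2) = 0 := by simp only [wedge]; linarith [hA', hB', hC', h']
    have z12 : wedge (w 1) (w 2) = 0 := by simp only [wedge]; linarith [hA', hB', hC', h']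
    have hspan : ∃ d : ℝ × ℝ, ∀ i, w i ∈ Submodule.span ℝ ({d} : Set (ℝ × ℝ)) := by
      by_cases h0 : w 0 = 0
      · by_cases hone : w 1 = 0
        · by_cases htwo : w 2 = 0
          · refine ⟨(1, 0), fun i => ?_⟩
            rcases hj6 i with rfl|rfl|rfl|rfl|rfl|rfl <;>
              simp only [h0, hone, htwo, e30, e41, e52, neg_zero] <;>
              exact Submodule.zero_mem _
          · refine ⟨w 2, fun i => ?_⟩
            rcases hj6 i with rfl|rfl|rfl|rfl|rfl|rfl
            · rw [h0]; exact Submodule.zero_mem _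
            · rw [hone]; exact Submodule.zero_mem _
            · exact Submodule.mem_span_singleton_self _
            · rw [e30, h0, neg_zero]; exact Submodule.zero_mem _
            · rw [e41, hone, neg_zero]; exact Submodule.zero_mem _
            · rw [e52]; exact Submodule.neg_mem _ (Submodule.mem_span_singleton_self _)
        · refine ⟨w 1, fun i => ?_⟩
          rcases hj6 i with rfl|rfl|rfl|rfl|rfl|rfl
          · rw [h0]; exact Submodule.zero_mem _
          · exact Submodule.mem_span_singleton_self _
          · exact wedge_span hone z12
          · rw [e30, h0, neg_zero]; exact Submodule.zero_mem _
          · rw [e41]; exact Submodule.neg_mem _ (Submodule.mem_span_singleton_self _)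
          · rw [e52]; exact Submodule.neg_mem _ (wedge_span hone z12)
      · refine ⟨w 0, fun i => ?_⟩
        rcases hj6 i with rfl|rfl|rfl|rfl|rfl|rfl
        · exact Submodule.mem_span_singleton_self _
        · exact wedge_span h0 z01
        · exact wedge_span h0 z02
        · rw [e30]; exact Submodule.neg_mem _ (Submodule.mem_span_singleton_self _)
        · rw [e41]; exact Submodule.neg_mem _ (wedge_span h0 z01)
        · rw [e52]; exact Submodule.neg_mem _ (wedge_span h0 z02)
    obtain ⟨d, hd⟩ := hspan
    have hGsub : convexHull ℝ (Set.range w)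
        ⊆ (Submodule.span ℝ ({d} : Set (ℝ × ℝ)) : Set (ℝ × ℝ)) := by
      apply convexHull_min _ (Submodule.span ℝ _).convex
      rintro y ⟨j, rfl⟩; exact hd j
    have hne : Submodule.span ℝ ({d} : Set (ℝ × ℝ)) ≠ ⊤ := by
      intro htop
      have h10 : ((1:ℝ),(0:ℝ)) ∈ Submodule.span ℝ ({d} : Set (ℝ × ℝ)) := by
        rw [htop]; trivial
      have h01 : ((0:ℝ),(1:ℝ)) ∈ Submodule.span ℝ ({d} : Set (ℝ × ℝ)) := by
        rw [htop]; trivial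
      rw [Submodule.mem_span_singleton] at h10 h01
      obtain ⟨t, ht⟩ := h10
      obtain ⟨r, hr⟩ := h01
      have ht1 := congrArg Prod.fst ht
      have ht2 := congrArg Prod.snd ht
      have hr1 := congrArg Prod.fst hr
      have hr2 := congrArg Prod.snd hr
      simp only [Prod.smul_fst, Prod.smul_snd, smul_eq_mul] at ht1 ht2 hr1 hr2
      have hcontra : (t * d.1) * (r * d.2) = (t * d.2) * (r * d.1) := by ring
      rw [ht1, hr2, ht2, hr1] at hcontra
      norm_num at hcontra
    have hnull : volume (Submodule.span ℝ ({d} : Set (ℝ × ℝ)) : Set (ℝ × ℝ)) = 0 :=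
      Measure.addHaar_submodule _ _ hne
    obtain ⟨z, hz⟩ := hKint
    exact (isOpen_interior.measure_pos volume ⟨z, hz⟩).ne'
      (measure_mono_null (interior_subset.trans (hw3.trans hGsub)) hnull)
  have hSx := hSpos
  simp only [u0v, u1v, wedge] at hSx
  -- hexagon-area hypotheses for w
  have h2w : ∀ j k, wedge (w j) (w k) + wedge (w k) (w (j + 1)) ≤ wedge (w j) (w (j + 1)) := by
    intro j k
    rcases hj6 j with rfl|rfl|rfl|rfl|rfl|rfl <;> rcases hj6 k with rfl|rfl|rfl|rfl|rfl|rfl <;>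
      simp only [i01, i11, i21, i31, i41, i51, e30, e41, e52, wedge, Prod.fst_neg,
        Prod.snd_neg] <;>
      linarith [hA', hB', hC', hSx]
  have h3w : ∀ j, 0 ≤ wedge (w j) (w (j + 2)) := by
    intro j
    rcases hj6 j with rfl|rfl|rfl|rfl|rfl|rfl <;>
      simp only [i02, i12, i22, i32, i42, i52, e30, e41, e52, wedge, Prod.fst_neg,
        Prod.snd_neg] <;>
      linarith [hA', hB', hC', hSx]
  have h4w : ∀ j, w j ≠ 0 := by
    intro j
    have key : ∀ m : ZMod 6, m = 0 ∨ m = 1 ∨ m = 2 → w m ≠ 0 := by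
      rintro m (rfl | rfl | rfl) <;> intro hz <;>
        rw [hz] at hA' hB' hC' hSx <;>
        simp only [Prod.fst_zero, Prod.snd_zero] at hA' hB' hC' hSx <;>
        linarith [hA', hB', hC', hSx]
    rcases hj6 j with rfl|rfl|rfl|rfl|rfl|rfl
    · exact key 0 (by tauto)
    · exact key 1 (by tauto)
    · exact key 2 (by tauto)
    · intro hz
      have : -w 0 = 0 := by rw [← e30]; exact hz
      rw [neg_eq_zero] at this
      exact key 0 (by tauto) this
    · intro hz
      have : -w 1 = 0 := by rw [← e41]; exact hz
      rw [neg_eq_zero] at this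
      exact key 1 (by tauto) this
    · intro hz
      have : -w 2 = 0 := by rw [← e52]; exact hz
      rw [neg_eq_zero] at this
      exact key 2 (by tauto) this
  have aux0 : wedge (w 0) (w 1) = 0 → w 1 = w 0 := by
    intro hzz
    simp only [wedge] at hzz
    have hX : wedge (w 1 - w 0) (u 0) = 0 := by
      simp only [u0v, wedge, Prod.fst_sub, Prod.snd_sub]
      linarith [hA', hB', hC', hzz]
    have hY : wedge (w 1 - w 0) (u 1) = 0 := by
      simp only [u1v, wedge, Prod.fst_sub, Prod.snd_sub]
      linarith [hA', hB', hC', hzz]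
    exact sub_eq_zero.mp (indep hSpos.ne' hX hY)
  have aux1 : wedge (w 1) (w 2) = 0 → w 2 = w 1 := by
    intro hzz
    simp only [wedge] at hzz
    have hX : wedge (w 2 - w 1) (u 0) = 0 := by
      simp only [u0v, wedge, Prod.fst_sub, Prod.snd_sub]
      linarith [hA', hB', hC', hzz]
    have hY : wedge (w 2 - w 1) (u 1) = 0 := by
      simp only [u1v, wedge, Prod.fst_sub, Prod.snd_sub]
      linarith [hA', hB', hC', hzz]
    exact sub_eq_zero.mp (indep hSpos.ne' hX hY)
  have aux2 : wedge (w 2) (w 3) = 0 → w 3 = w 2 := by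
    intro hzz
    rw [e30] at hzz
    simp only [wedge, Prod.fst_neg, Prod.snd_neg] at hzz
    have hX : wedge (w 3 - w 2) (u 0) = 0 := by
      rw [e30]
      simp only [u0v, wedge, Prod.fst_sub, Prod.snd_sub, Prod.fst_neg, Prod.snd_neg]
      linarith [hA', hB', hC', hzz]
    have hY : wedge (w 3 - w 2) (u 1) = 0 := by
      rw [e30]
      simp only [u1v, wedge, Prod.fst_sub, Prod.snd_sub, Prod.fst_neg, Prod.snd_neg]
      linarith [hA', hB', hC', hzz]
    exact sub_eq_zero.mp (indep hSpos.ne' hX hY)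
  have h5w : ∀ j, wedge (w j) (w (j + 1)) = 0 → w (j + 1) = w j := by
    intro j
    rcases hj6 j with rfl|rfl|rfl|rfl|rfl|rfl
    · rw [i01]; exact aux0
    · rw [i11]; exact aux1
    · rw [i21]; exact aux2
    · rw [i31]
      intro hzz
      rw [e30, e41, wedge_neg_neg] at hzz
      rw [e41, e30]
      exact congrArg Neg.neg (aux0 hzz)
    · rw [i41]
      intro hzz
      rw [e41, e52, wedge_neg_neg] at hzz
      rw [e52, e41]
      exact congrArg Neg.neg (aux1 hzz)
    · rw [i51]
      intro hzz
      have hzz' : wedge (w 2) (w 3) = 0 := by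
        rw [e52, wedge_neg_left] at hzz
        rw [e30, wedge_neg_right]
        exact hzz
      rw [e52, ← aux2 hzz', e30, neg_neg]
  have h6w : ∀ j, wedge (w j) (w (j + 1)) = 0 →
      0 < wedge (w (j + 1)) (w (j + 2)) ∧ 0 < wedge (w (j + 2)) (w (j + 3)) := by
    intro j
    rcases hj6 j with rfl|rfl|rfl|rfl|rfl|rfl <;>
      · intro hzz
        simp only [i01, i11, i21, i31, i41, i51, i02, i12, i22, i32, i42, i52, i03, i13, i23,
          i33, i43, i53, e30, e41, e52, wedge, Prod.fst_neg, Prod.snd_neg] at hzz ⊢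
        constructor <;> linarith [hA', hB', hC', hSx, hzz]
  have hGvol := hex_area w hw1 h2w h3w h4w h5w h6w
  -- hexagon-area hypotheses for u
  have hadj : ∀ j, wedge (u j) (u (j + 1)) = wedge (u 0) (u 1) := by
    intro j
    rcases hj6 j with rfl|rfl|rfl|rfl|rfl|rfl <;>
      simp only [i01, i11, i21, i31, i41, i51, u0v, u1v, u2v, u3v, u4v, u5v, wedge] <;> ring
  have h2u : ∀ j k, wedge (u j) (u k) + wedge (u k) (u (j + 1)) ≤ wedge (u j) (u (j + 1)) := by
    intro j k
    rcases hj6 j with rfl|rfl|rfl|rfl|rfl|rfl <;> rcases hj6 k with rfl|rfl|rfl|rfl|rfl|rfl <;>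
      simp only [i01, i11, i21, i31, i41, i51, u0v, u1v, u2v, u3v, u4v, u5v, wedge] <;>
      linarith [hSx]
  have h3u : ∀ j, 0 ≤ wedge (u j) (u (j + 2)) := by
    intro j
    rcases hj6 j with rfl|rfl|rfl|rfl|rfl|rfl <;>
      simp only [i02, i12, i22, i32, i42, i52, u0v, u1v, u2v, u3v, u4v, u5v, wedge] <;>
      linarith [hSx]
  have h4u : ∀ j, u j ≠ 0 := by
    intro j hz
    have hz' : wedge (u j) (u (j + 1)) = 0 := by rw [hz, wedge_zero_left]
    rw [hadj j] at hz'
    exact hSpos.ne' hz'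
  have h5u : ∀ j, wedge (u j) (u (j + 1)) = 0 → u (j + 1) = u j := by
    intro j hz
    rw [hadj j] at hz
    exact absurd hz hSpos.ne'
  have h6u : ∀ j, wedge (u j) (u (j + 1)) = 0 →
      0 < wedge (u (j + 1)) (u (j + 2)) ∧ 0 < wedge (u (j + 2)) (u (j + 3)) := by
    intro j hz
    rw [hadj j] at hz
    exact absurd hz hSpos.ne'
  have hHvol := hex_area u pii h2u h3u h4u h5u h6u
  -- final computations
  have hsumw : wedge (w 0) (w 1) + wedge (w 1) (w 2) + wedge (w 2) (w 3)
      = 4 * wedge (u 0) (u 1) := by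
    simp only [u0v, u1v, e30, wedge, Prod.fst_neg, Prod.snd_neg]; ring
  have hsumu : wedge (u 0) (u 1) + wedge (u 1) (u 2) + wedge (u 2) (u 3)
      = 3 * wedge (u 0) (u 1) := by
    simp only [u0v, u1v, u2v, u3v, wedge]; ring
  have hGt : (volume (convexHull ℝ (Set.range w))).toReal = 4 * wedge (u 0) (u 1) := by
    rw [hGvol, hsumw, ENNReal.toReal_ofReal (by linarith [hSpos])]
  have hHt : (volume (convexHull ℝ (Set.range u))).toReal = 3 * wedge (u 0) (u 1) := by
    rw [hHvol, hsumu, ENNReal.toReal_ofReal (by linarith [hSpos])]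
  refine ⟨pi1, pii, ?_, ?_⟩
  · rw [hGt, hHt]; ring
  · intro j
    rw [hGt]
    rcases hj6 j with rfl|rfl|rfl|rfl|rfl|rfl <;>
      simp only [i02, i12, i22, i32, i42, i52, u0v, u1v, u2v, u3v, u4v, u5v, wedge] <;> ring
end
end
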